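/- arXiv:2008.02767 — 9 statements merged into one kernel-verified Lean document; each statement's English description precedes it below -/
import Mathlib

section
/- Let V be a valuation ring and p ⊆ V a prime ideal. Then V is isomorphic to the fiber product (V/p) ×_{V_p/pV_p} V_p: the ring homomorphism V → (V/p) × V_p, v ↦ (v mod p, v/1), is injective, and its image is exactly the set of pairs (x, y) such that the image of x under the induced map V/p → V_p/(pV_p) equals the image of y under the quotient map V_p → V_p/(pV_p). Here pV_p denotes the ideal Ideal.map (algebraMap V (Localization.AtPrime p)) p. -/
lemma aux_mem_pVp (V : Type*) [CommRing V] [IsDomain V] [ValuationRing V]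
    (p : Ideal V) [p.IsPrime] (z : Localization.AtPrime p)
    (hz : z ∈ Ideal.map (algebraMap V (Localization.AtPrime p)) p) :
    ∃ c ∈ p, algebraMap V (Localization.AtPrime p) c = z := by
  obtain ⟨⟨a, s⟩, h⟩ :=
    (IsLocalization.mem_map_algebraMap_iff p.primeCompl (Localization.AtPrime p)).1 hz
  obtain ⟨c, hc | hc⟩ := ValuationRing.cond (s : V) (a : V)
  · -- s * c = a
    have hcp : c ∈ p := by
      have : (s : V) * c ∈ p := hc ▸ a.2
      exact (Ideal.IsPrime.mem_or_mem ‹p.IsPrime› this).resolve_left s.2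
    refine ⟨c, hcp, ?_⟩
    have hu : IsUnit (algebraMap V (Localization.AtPrime p) s) :=
      IsLocalization.map_units _ s
    apply hu.mul_left_cancel
    rw [← map_mul, hc, ← h, mul_comm]
  · -- a * c = s : contradiction since a ∈ p, s ∉ p
    exact absurd (hc ▸ Ideal.mul_mem_right c p a.2) s.2

/-- For a valuation ring `V` and a prime ideal `p ⊆ V`, the ring `V` is the fiber product
`(V/p) ×_{V_p/pV_p} V_p`: the map `V → (V/p) × V_p` is injective with image the pairs that agree
in `V_p/(pV_p)`. -/
theorem stmt2 (V : Type*) [CommRing V] [IsDomain V] [ValuationRing V]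
    (p : Ideal V) [p.IsPrime] :
    Function.Injective
      ((Ideal.Quotient.mk p).prod (algebraMap V (Localization.AtPrime p))) ∧
    Set.range ((Ideal.Quotient.mk p).prod (algebraMap V (Localization.AtPrime p))) =
      {xy : (V ⧸ p) × Localization.AtPrime p |
        Ideal.quotientMap (Ideal.map (algebraMap V (Localization.AtPrime p)) p)
            (algebraMap V (Localization.AtPrime p)) Ideal.le_comap_map xy.1 =
          Ideal.Quotient.mk (Ideal.map (algebraMap V (Localization.AtPrime p)) p) xy.2} := by
  have hinj : Function.Injective (algebraMap V (Localization.AtPrime p)) :=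
    IsLocalization.injective _ p.primeCompl_le_nonZeroDivisors
  constructor
  · intro a b hab
    exact hinj (congrArg Prod.snd hab)
  · ext xy
    constructor
    · rintro ⟨v, rfl⟩
      simp [Ideal.quotientMap_mk]
    · rintro h
      obtain ⟨v, hv⟩ := Ideal.Quotient.mk_surjective xy.1
      have h2 : Ideal.Quotient.mk (Ideal.map (algebraMap V (Localization.AtPrime p)) p)
          (algebraMap V (Localization.AtPrime p) v) =
          Ideal.Quotient.mk _ xy.2 := by
        rw [← Ideal.quotientMap_mk (H := Ideal.le_comap_map), hv]; exact h
      have hmem : algebraMap V (Localization.AtPrime p) v - xy.2 ∈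
          Ideal.map (algebraMap V (Localization.AtPrime p)) p :=
        Ideal.Quotient.eq.mp h2
      obtain ⟨c, hcp, hc⟩ := aux_mem_pVp V p _ hmem
      refine ⟨v - c, ?_⟩
      have : xy = ((Ideal.Quotient.mk p) v, (algebraMap V (Localization.AtPrime p)) v
          - ((algebraMap V (Localization.AtPrime p)) v - xy.2)) := by
        ext
        · exact hv.symm
        · simp
      rw [this, RingHom.prod_apply, map_sub, map_sub, hc, Prod.mk.injEq]
      refine ⟨?_, rfl⟩
      rw [Ideal.Quotient.eq_zero_iff_mem.mpr hcp, sub_zero]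
end

section
/- Let V be a valuation ring and p ⊆ V a prime ideal. Then the value group of V/p is isomorphic to (V_p)^×/V^×: there is a group isomorphism between the quotient of the unit group (Localization.AtPrime p)ˣ by the image of Vˣ (under the unit map induced by the localization homomorphism V → V_p) and the quotient of the unit group (FractionRing (V/p))ˣ by the image of (V/p)ˣ (under the unit map induced by the algebra map V/p → FractionRing (V/p)). -/
/-- For a valuation ring `V` and a prime ideal `p ⊆ V`, the value group of `V/p`, namely
`κ(p)ˣ/(V/p)ˣ` where `κ(p) = FractionRing (V/p)`, is isomorphic to `(V_p)ˣ/Vˣ`. -/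
theorem stmt3 (V : Type*) [CommRing V] [IsDomain V] [ValuationRing V]
    (p : Ideal V) [p.IsPrime] :
    Nonempty
      (((Localization.AtPrime p)ˣ ⧸
          (Units.map (algebraMap V (Localization.AtPrime p)).toMonoidHom).range) ≃*
        ((FractionRing (V ⧸ p))ˣ ⧸
          (Units.map (algebraMap (V ⧸ p) (FractionRing (V ⧸ p))).toMonoidHom).range)) := by
  classical
  set R := Localization.AtPrime p with hR
  set Q := V ⧸ p with hQ
  set K := FractionRing Q with hK
  set π : V →+* Q := Ideal.Quotient.mk p with hπ
  -- `1 + a` is a unit for `a ∈ p`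
  have hone : ∀ a ∈ p, IsUnit (1 + a) := by
    intro a ha
    by_contra h
    have h1 : (1 + a) ∈ IsLocalRing.maximalIdeal V := h
    have h2 : a ∈ IsLocalRing.maximalIdeal V :=
      IsLocalRing.le_maximalIdeal (Ideal.IsPrime.ne_top ‹p.IsPrime›) ha
    have h3 : (1 : V) ∈ IsLocalRing.maximalIdeal V := by simpa using sub_mem h1 h2
    exact (IsLocalRing.maximalIdeal.isMaximal V).ne_top
      (Ideal.eq_top_of_isUnit_mem _ h3 isUnit_one)
  -- if `π w` is a unit then `w` is a unit
  have hlift : ∀ w : V, IsUnit (π w) → IsUnit w := by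
    intro w hw
    obtain ⟨t, ht⟩ := hw
    obtain ⟨w', hw'⟩ := Ideal.Quotient.mk_surjective (t⁻¹ : Qˣ).val
    have h1 : π (w * w') = π 1 := by
      rw [map_mul, ← ht, show π w' = ↑t⁻¹ from hw', map_one, Units.mul_inv]
    have h2 : w * w' - 1 ∈ p := (Ideal.Quotient.eq).mp h1
    have h3 : IsUnit (w * w') := by
      have := hone _ h2
      rwa [add_sub_cancel] at this
    exact isUnit_of_mul_isUnit_left h3
  -- the map `V → K`
  set g : V →+* K := (algebraMap Q K).comp π with hg
  have hgu : ∀ y : p.primeCompl, IsUnit (g y) := by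
    intro ⟨y, hy⟩
    have h0 : π y ≠ 0 := fun h => hy (Ideal.Quotient.eq_zero_iff_mem.mp h)
    exact IsLocalization.map_units K ⟨π y, mem_nonZeroDivisors_of_ne_zero h0⟩
  set f : R →+* K := IsLocalization.lift hgu with hf
  have hfa : ∀ v : V, f (algebraMap V R v) = algebraMap Q K (π v) :=
    fun v => IsLocalization.lift_eq hgu v
  have hπs : ∀ s : p.primeCompl, (algebraMap Q K) (π s) ≠ 0 := by
    intro s
    have h0 : π s ≠ 0 := fun h => s.2 (Ideal.Quotient.eq_zero_iff_mem.mp h)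
    exact fun h => h0 (IsFractionRing.injective Q K (by rw [h, map_zero]))
  have hfmk : ∀ (v : V) (s : p.primeCompl),
      f (IsLocalization.mk' R v s) = algebraMap Q K (π v) / algebraMap Q K (π s) := by
    intro v s
    rw [eq_div_iff (hπs s), ← hfa, ← hfa, ← map_mul, IsLocalization.mk'_spec]
  set N₁ := (Units.map (algebraMap V R).toMonoidHom).range with hN₁
  set N₂ := (Units.map (algebraMap Q K).toMonoidHom).range with hN₂
  set F : Rˣ →* Kˣ ⧸ N₂ := (QuotientGroup.mk' N₂).comp (Units.map f.toMonoidHom) with hF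
  -- surjectivity
  have hFsurj : Function.Surjective F := by
    intro y
    induction y using QuotientGroup.induction_on with
    | H x =>
      obtain ⟨a, b, hb, hx⟩ := IsFractionRing.div_surjective (A := Q) (x : K)
      obtain ⟨va, rfl⟩ := Ideal.Quotient.mk_surjective a
      obtain ⟨vb, rfl⟩ := Ideal.Quotient.mk_surjective b
      have hvb : vb ∈ p.primeCompl := by
        intro h
        exact nonZeroDivisors.ne_zero hb (Ideal.Quotient.eq_zero_iff_mem.mpr h)
      have hva : va ∈ p.primeCompl := by
        intro h
        apply x.ne_zero
        rw [← hx, Ideal.Quotient.eq_zero_iff_mem.mpr h, map_zero, zero_div]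
      have hu : IsUnit (IsLocalization.mk' R va ⟨vb, hvb⟩) :=
        (IsLocalization.AtPrime.isUnit_mk'_iff R p va ⟨vb, hvb⟩).mpr hva
      refine ⟨hu.unit, ?_⟩
      have : Units.map f.toMonoidHom hu.unit = x := by
        ext
        show f (IsLocalization.mk' R va ⟨vb, hvb⟩) = (x : K)
        rw [hfmk]
        exact hx
      show QuotientGroup.mk (Units.map f.toMonoidHom hu.unit) = QuotientGroup.mk x
      rw [this]
  -- the key kernel lemma: residue 1 implies in the image of `Vˣ`
  have main : ∀ u : Rˣ, f (u : R) = 1 → u ∈ N₁ := by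
    intro u hu1
    obtain ⟨v, s, hmk⟩ : ∃ (v : V) (s : p.primeCompl), IsLocalization.mk' R v s = (u : R) := by
      obtain ⟨⟨v, s⟩, h⟩ := IsLocalization.mk'_surjective p.primeCompl (u : R)
      exact ⟨v, s, h⟩
    have hvs : π v = π s := by
      have := hfmk v s
      rw [hmk, hu1] at this
      have := (div_eq_one_iff_eq (hπs s)).mp this.symm
      exact IsFractionRing.injective Q K this
    have hπs0 : π s ≠ 0 := fun h => s.2 (Ideal.Quotient.eq_zero_iff_mem.mp h)
    obtain ⟨c, hc | hc⟩ := ValuationRing.cond v s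
    · -- v * c = s
      have hπc : π c = 1 := by
        have hπv0 : π v ≠ 0 := by rw [hvs]; exact hπs0
        have h1 : π v * π c = π v * 1 := by rw [← map_mul, hc, hvs, mul_one]
        exact mul_left_cancel₀ hπv0 h1
      have hcu : IsUnit c := hlift c (hπc ▸ isUnit_one)
      refine ⟨(hcu.unit)⁻¹, ?_⟩
      rw [map_inv]
      refine inv_eq_of_mul_eq_one_right ?_
      rw [Units.ext_iff]
      simp only [Units.val_mul, Units.coe_map, Units.val_one, MonoidHom.coe_coe,
        IsUnit.unit_spec]
      show (algebraMap V R) c * (u : R) = 1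
      rw [← hmk, IsLocalization.mul_mk'_eq_mk'_of_mul, mul_comm c v, hc,
        IsLocalization.mk'_self'']
    · -- s * c = v
      have hπc : π c = 1 := by
        have h1 : π ↑s * π c = π ↑s * 1 := by rw [← map_mul, hc, ← hvs, mul_one]
        exact mul_left_cancel₀ hπs0 h1
      have hcu : IsUnit c := hlift c (hπc ▸ isUnit_one)
      refine ⟨hcu.unit, ?_⟩
      rw [Units.ext_iff]
      simp only [Units.coe_map, MonoidHom.coe_coe, IsUnit.unit_spec]
      show (algebraMap V R) c = (u : R)
      rw [← hmk, ← hc, mul_comm (s : V) c, ← IsLocalization.mul_mk'_eq_mk'_of_mul,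
        IsLocalization.mk'_self'', mul_one]
  -- kernel computation
  have hker : F.ker = N₁ := by
    ext u
    constructor
    · intro hu
      have hu' : Units.map f.toMonoidHom u ∈ N₂ :=
        (QuotientGroup.eq_one_iff _).mp hu
      obtain ⟨t, ht⟩ := hu'
      obtain ⟨w, hw⟩ := Ideal.Quotient.mk_surjective (t : Q)
      have hwu : IsUnit w := hlift w (show IsUnit (π w) by rw [show π w = ↑t from hw]; exact t.isUnit)
      -- f u = algebraMap (π w)
      have h1 : f (u : R) = algebraMap Q K (π w) := by
        have := congrArg Units.val ht
        simp only [Units.coe_map] at this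
        rw [← show π w = ↑t from hw] at this
        exact this.symm
      set W := hwu.unit with hW
      set u' := u * (Units.map (algebraMap V R).toMonoidHom W)⁻¹ with hu'def
      have key : (u' : R) * algebraMap V R w = (u : R) := by
        have h2 : u' * Units.map (algebraMap V R).toMonoidHom W = u := by
          rw [hu'def, inv_mul_cancel_right]
        have h3 := congrArg Units.val h2
        simp only [Units.val_mul, Units.coe_map] at h3
        rw [← h3]
        norm_num [hW]
      have hres : f (u' : R) = 1 := by
        have h4 : f (u' : R) * f (algebraMap V R w) = f (u : R) := by
          rw [← map_mul, key]
        rw [hfa, h1] at h4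
        have h5 : algebraMap Q K (π w) ≠ 0 := by
          rw [hw]
          intro h
          exact t.ne_zero (IsFractionRing.injective Q K (by rw [h, map_zero]))
        exact mul_right_cancel₀ h5 (h4.trans (one_mul _).symm)
      have heq : u = u' * Units.map (algebraMap V R).toMonoidHom W := by
        rw [hu'def, inv_mul_cancel_right]
      rw [heq]
      exact mul_mem (main u' hres) ⟨W, rfl⟩
    · rintro ⟨w, rfl⟩
      show QuotientGroup.mk (Units.map f.toMonoidHom (Units.map (algebraMap V R).toMonoidHom w)) = 1
      rw [QuotientGroup.eq_one_iff]
      refine ⟨Units.map π.toMonoidHom w, ?_⟩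
      ext
      simp only [Units.coe_map, MonoidHom.coe_coe, RingHom.toMonoidHom_eq_coe]
      exact (hfa w).symm
  exact ⟨(QuotientGroup.quotientMulEquivOfEq hker.symm).trans
    (QuotientGroup.quotientKerEquivOfSurjective F hFsurj)⟩
end

section
/- Let V be a valuation ring which is a Henselian local ring, and let p ⊆ V be a prime ideal. Then both the localization V_p = Localization.AtPrime p and the quotient V/p are Henselian local rings. -/
open Polynomial IsLocalRing Finset

lemma unit_add_mem {V : Type*} [CommRing V] [IsLocalRing V] {x y : V}
    (hx : IsUnit x) (hy : y ∈ maximalIdeal V) : IsUnit (x + y) := by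
  by_contra h
  rw [← mem_nonunits_iff, ← mem_maximalIdeal] at h
  exact mem_nonunits_iff.mp ((mem_maximalIdeal _).mp (by simpa using Ideal.sub_mem _ h hy)) hx

lemma max_surj (V : Type*) [CommRing V] [IsDomain V] [ValuationRing V]
    (p : Ideal V) [p.IsPrime] (x : Localization.AtPrime p)
    (hx : x ∈ maximalIdeal (Localization.AtPrime p)) :
    ∃ a ∈ p, algebraMap V (Localization.AtPrime p) a = x := by
  obtain ⟨⟨a, s⟩, rfl⟩ := IsLocalization.mk'_surjective p.primeCompl x
  have ha : a ∈ p := by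
    by_contra h
    exact (mem_maximalIdeal _).mp hx
      ((IsLocalization.AtPrime.isUnit_mk'_iff (Localization.AtPrime p) p a s).mpr h)
  obtain ⟨c, hc | hc⟩ := ValuationRing.cond (s : V) a
  · refine ⟨c, ?_, ?_⟩
    · exact (Ideal.IsPrime.mem_or_mem ‹_› (hc ▸ ha)).resolve_left s.2
    · dsimp only
      rw [← hc, IsLocalization.mk'_mul_cancel_left]
  · exact absurd (hc ▸ Ideal.mul_mem_right _ _ ha) s.2

lemma loc_henselian (V : Type*) [CommRing V] [IsDomain V] [ValuationRing V]
    [HenselianLocalRing V] (p : Ideal V) [p.IsPrime] :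
    HenselianLocalRing (Localization.AtPrime p) := by
  classical
  set R := Localization.AtPrime p with hR
  constructor
  intro f hf a₀ h₁ h₂
  set φ := algebraMap V R with hφ
  set F := f.comp (X + C a₀) with hFdef
  have hFm : F.Monic := hf.comp_X_add_C a₀
  set c : ℕ → R := F.coeff with hc
  have hc0 : c 0 = f.eval a₀ := by
    rw [hc, coeff_zero_eq_eval_zero, hFdef, eval_comp]; simp
  have hc1 : c 1 = f.derivative.eval a₀ := by
    have h2 : (derivative F).coeff 0 = f.derivative.eval a₀ := by
      rw [coeff_zero_eq_eval_zero, hFdef, derivative_comp, eval_mul, eval_comp]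
      simp
    rw [hc, ← h2, coeff_derivative]
    push_cast
    ring
  have hc0m : c 0 ∈ maximalIdeal R := hc0 ▸ h₁
  -- the degree
  obtain ⟨m, hm⟩ : ∃ m, f.natDegree = m + 1 := by
    have h0 : f.natDegree ≠ 0 := by
      intro h0
      have hf1 : f = 1 := hf.natDegree_eq_zero.mp h0
      rw [hf1, eval_one] at h₁
      exact (maximalIdeal.isMaximal R).ne_top (Ideal.eq_top_of_isUnit_mem _ h₁ isUnit_one)
    exact ⟨f.natDegree - 1, by omega⟩
  have hn : F.natDegree = m + 1 := by
    rw [hFdef, natDegree_comp]; simp [hm]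
  -- the units
  have h₂' : IsUnit (c 1) := hc1 ▸ h₂
  set u := h₂'.unit with hu
  have huv : (u : R) = c 1 := h₂'.unit_spec
  -- the coefficients of the auxiliary polynomial
  set d : ℕ → R := fun k => c k * c 0 ^ (k - 1) * (↑u⁻¹ : R) ^ k with hd
  have hdm : ∀ k, 2 ≤ k → d k ∈ maximalIdeal R := by
    intro k hk
    exact Ideal.mul_mem_right _ _ (Ideal.mul_mem_left _ _
      (Ideal.pow_mem_of_mem _ hc0m _ (by omega)))
  set e : ℕ → V := fun k =>
    if h : d k ∈ maximalIdeal R then (max_surj V p _ h).choose else 0 with he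
  have he1 : ∀ k, e k ∈ p := by
    intro k
    rw [he]
    dsimp only
    split
    · exact (max_surj V p _ ‹_›).choose_spec.1
    · exact p.zero_mem
  have he2 : ∀ k, 2 ≤ k → φ (e k) = d k := by
    intro k hk
    rw [he]
    dsimp only
    rw [dif_pos (hdm k hk)]
    exact (max_surj V p _ (hdm k hk)).choose_spec.2
  -- the auxiliary polynomial over V
  set G : V[X] :=
    X ^ (m + 1) + (X ^ m + ∑ j ∈ range m, C (e (j + 2)) * X ^ (m - 1 - j)) with hG
  have hlt : ∀ a : ℕ, a < m + 1 → ((a : WithBot ℕ) < ((m+1 : ℕ) : WithBot ℕ)) := by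
    intro a ha
    exact_mod_cast ha
  have hGm : G.Monic := by
    apply monic_X_pow_add
    apply lt_of_le_of_lt (degree_add_le _ _)
    apply max_lt
    · exact lt_of_le_of_lt (degree_X_pow_le m) (hlt m (Nat.lt_succ_self m))
    · apply lt_of_le_of_lt (degree_sum_le _ _)
      apply Finset.sup_lt_iff (lt_of_le_of_lt bot_le (hlt 0 (Nat.succ_pos m))) |>.mpr
      intro j hj
      exact lt_of_le_of_lt (degree_C_mul_X_pow_le _ _) (hlt _ (by omega))
  have hple : p ≤ maximalIdeal V := le_maximalIdeal (Ideal.IsPrime.ne_top ‹_›)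
  have happrox : G.eval (-1) ∈ maximalIdeal V := by
    rw [hG]
    simp only [eval_add, eval_pow, eval_finset_sum, eval_mul, eval_C, eval_X]
    have h0 : (-1 : V) ^ (m + 1) + (-1) ^ m = 0 := by rw [pow_succ]; ring
    rw [← add_assoc, h0, zero_add]
    exact Ideal.sum_mem _ fun j hj => hple (Ideal.mul_mem_right _ _ (he1 _))
  have hderiv : IsUnit (G.derivative.eval (-1)) := by
    rw [hG]
    simp only [derivative_add, derivative_X_pow, derivative_sum, derivative_C_mul,
      eval_add, eval_pow, eval_finset_sum, eval_mul, eval_C, eval_X, eval_natCast]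
    have h0 : ((m : V) + 1) * (-1) ^ m + (m : V) * (-1) ^ (m - 1) =
        (-1 : V) ^ m := by
      rcases Nat.eq_zero_or_pos m with rfl | hm0
      · simp
      · obtain ⟨l, rfl⟩ : ∃ l, m = l + 1 := ⟨m - 1, by omega⟩
        push_cast
        rw [pow_succ]
        ring
    rw [← add_assoc, show m + 1 - 1 = m by omega]
    push_cast
    rw [h0]
    exact unit_add_mem (IsUnit.pow _ (isUnit_one.neg)) <| Ideal.sum_mem _ fun j hj =>
      hple (Ideal.mul_mem_right _ _ (he1 _))
  obtain ⟨r, hr, hrm⟩ := HenselianLocalRing.is_henselian G hGm (-1) happrox hderiv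
  have hru : IsUnit r := by
    have := unit_add_mem (isUnit_one.neg) hrm
    simpa using this
  have hρu : IsUnit (φ r) := hru.map φ
  set P := hρu.unit with hP
  have hPv : (P : R) = φ r := hρu.unit_spec
  -- the key equation
  set S : R := ∑ j ∈ range m, d (j + 2) * (P : R) ^ (m - 1 - j) with hS
  have hE : (P : R) ^ (m + 1) + (P : R) ^ m + S = 0 := by
    have := congrArg φ hr.eq_zero
    rw [map_zero] at this
    rw [hS]
    rw [← this, hG]
    simp only [eval_add, eval_pow, eval_finset_sum, eval_mul, eval_C, eval_X,
      map_add, map_pow, map_sum, map_mul, hPv]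
    rw [add_assoc]
    congr 1
    congr 1
    apply Finset.sum_congr rfl
    intro j hj
    rw [he2 _ (by omega)]
  -- the root
  set t : R := c 0 * (↑u⁻¹ : R) * (↑P⁻¹ : R) with ht
  have htm : t ∈ maximalIdeal R :=
    Ideal.mul_mem_right _ _ (Ideal.mul_mem_right _ _ hc0m)
  refine ⟨t + a₀, ?_, by simpa using htm⟩
  have hFe : f.eval (t + a₀) = F.eval t := by rw [hFdef, eval_comp]; simp
  rw [IsRoot, hFe, eval_eq_sum_range, hn]
  have hinv1 : (↑P⁻¹ : R) * (P : R) = 1 := P.inv_mul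
  have hinvpow : ∀ a b : ℕ, (↑P⁻¹ : R) ^ (a + b) * (P : R) ^ a = (↑P⁻¹ : R) ^ b := by
    intro a b
    have h1 : (↑P⁻¹ : R) ^ a * (P : R) ^ a = 1 := by rw [← mul_pow, hinv1, one_pow]
    calc (↑P⁻¹ : R) ^ (a + b) * (P : R) ^ a
        = ((↑P⁻¹ : R) ^ a * (P : R) ^ a) * (↑P⁻¹ : R) ^ b := by rw [pow_add]; ring
      _ = (↑P⁻¹ : R) ^ b := by rw [h1, one_mul]
  have key : ∀ k ∈ range (m + 1 + 1), c k * t ^ k =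
      c 0 * (↑P⁻¹ : R) ^ (m + 1) *
        (if k = 0 then (P : R) ^ (m + 1) else if k = 1 then (P : R) ^ m
          else d k * (P : R) ^ (m + 1 - k)) := by
    intro k hk
    match k with
    | 0 =>
      rw [if_pos rfl]
      have h := hinvpow (m + 1) 0
      rw [add_zero, pow_zero] at h
      rw [pow_zero, mul_one, mul_assoc, h, mul_one]
    | 1 =>
      rw [if_neg one_ne_zero, if_pos rfl]
      have hp1 : (↑P⁻¹ : R) ^ (m + 1) * (P : R) ^ m = (↑P⁻¹ : R) := by
        have h := hinvpow m 1
        rwa [pow_one] at h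
      calc c 1 * t ^ 1 = (↑u : R) * (↑u⁻¹ : R) * (c 0 * (↑P⁻¹ : R)) := by
            rw [pow_one, ht, huv]; ring
        _ = c 0 * (↑P⁻¹ : R) := by rw [Units.mul_inv, one_mul]
        _ = c 0 * ((↑P⁻¹ : R) ^ (m + 1) * (P : R) ^ m) := by rw [hp1]
        _ = c 0 * (↑P⁻¹ : R) ^ (m + 1) * (P : R) ^ m := by ring
    | (k + 2) =>
      rw [if_neg (by omega), if_neg (by omega)]
      have hkm : k + 2 ≤ m + 1 := by
        simp only [Finset.mem_range] at hk; omega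
      have hpow : (↑P⁻¹ : R) ^ (m + 1) * (P : R) ^ (m + 1 - (k + 2)) = (↑P⁻¹ : R) ^ (k + 2) := by
        have h := hinvpow (m + 1 - (k + 2)) (k + 2)
        rwa [show m + 1 - (k + 2) + (k + 2) = m + 1 by omega] at h
      have hdk : d (k + 2) = c (k + 2) * c 0 ^ (k + 1) * (↑u⁻¹ : R) ^ (k + 2) := rfl
      calc c (k + 2) * t ^ (k + 2)
          = c (k + 2) * (c 0 ^ (k + 2) * (↑u⁻¹ : R) ^ (k + 2) * (↑P⁻¹ : R) ^ (k + 2)) := by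
            rw [ht]; ring
        _ = (c (k + 2) * c 0 ^ (k + 1) * (↑u⁻¹ : R) ^ (k + 2)) * c 0 * (↑P⁻¹ : R) ^ (k + 2) := by
            rw [pow_succ (c 0) (k + 1)]; ring
        _ = d (k + 2) * c 0 * ((↑P⁻¹ : R) ^ (m + 1) * (P : R) ^ (m + 1 - (k + 2))) := by
            rw [hpow, hdk]
        _ = c 0 * (↑P⁻¹ : R) ^ (m + 1) * (d (k + 2) * (P : R) ^ (m + 1 - (k + 2))) := by
            ring
  rw [Finset.sum_congr rfl key, ← Finset.mul_sum]
  have : ∑ k ∈ range (m + 1 + 1),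
      (if k = 0 then (P : R) ^ (m + 1) else if k = 1 then (P : R) ^ m
        else d k * (P : R) ^ (m + 1 - k)) = (P : R) ^ (m + 1) + (P : R) ^ m + S := by
    rw [Finset.sum_range_succ', Finset.sum_range_succ']
    norm_num
    rw [hS]
    have hterm : ∀ x ∈ Finset.range m, d (x + 1 + 1) * (P : R) ^ (m + 1 - (x + 1 + 1)) =
        d (x + 2) * (P : R) ^ (m - 1 - x) := by
      intro x hx
      congr 2
      omega
    rw [Finset.sum_congr rfl hterm]
    ring
  rw [this, hE, mul_zero]

lemma quot_henselian (V : Type*) [CommRing V] [HenselianLocalRing V]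
    (p : Ideal V) (hp : p ≠ ⊤) : HenselianLocalRing (V ⧸ p) := by
  have hple : p ≤ maximalIdeal V := le_maximalIdeal hp
  have : Nontrivial (V ⧸ p) := Ideal.Quotient.nontrivial_iff.mpr hp
  have : IsLocalRing (V ⧸ p) := IsLocalRing.of_surjective' _ Ideal.Quotient.mk_surjective
  have hloc : IsLocalHom (Ideal.Quotient.mk p) :=
    isLocalHom_of_le_jacobson_bot p
      (by rw [IsLocalRing.jacobson_eq_maximalIdeal ⊥ bot_ne_top]; exact hple)
  constructor
  intro f hf a₀ h₁ h₂
  -- lift f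
  have hlift : f ∈ Polynomial.lifts (Ideal.Quotient.mk p) := by
    obtain ⟨F, hF⟩ := Polynomial.map_surjective _ Ideal.Quotient.mk_surjective f
    exact ⟨F, hF⟩
  obtain ⟨F, hF, _, hFm⟩ := Polynomial.lifts_and_degree_eq_and_monic hlift hf
  obtain ⟨b₀, rfl⟩ := Ideal.Quotient.mk_surjective a₀
  have heval : ∀ b : V, f.eval (Ideal.Quotient.mk p b) = Ideal.Quotient.mk p (F.eval b) := by
    intro b
    rw [← hF, eval_map, eval₂_at_apply]
  have h₁' : F.eval b₀ ∈ maximalIdeal V := by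
    rw [mem_maximalIdeal, mem_nonunits_iff]
    intro h
    rw [mem_maximalIdeal, mem_nonunits_iff] at h₁
    exact h₁ (heval b₀ ▸ h.map (Ideal.Quotient.mk p))
  have h₂' : IsUnit (F.derivative.eval b₀) := by
    apply hloc.1
    rw [← eval₂_at_apply, ← eval_map, ← derivative_map, hF]
    exact h₂
  obtain ⟨a, ha, haa⟩ := HenselianLocalRing.is_henselian F hFm b₀ h₁' h₂'
  refine ⟨Ideal.Quotient.mk p a, ?_, ?_⟩
  · rw [IsRoot, heval a, ha.eq_zero, map_zero]
  · rw [← map_sub, mem_maximalIdeal, mem_nonunits_iff]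
    intro h
    exact mem_nonunits_iff.mp ((mem_maximalIdeal _).mp haa) (hloc.1 _ h)

/-- For a Henselian valuation ring `V` and a prime ideal `p ⊆ V`, both the localization `V_p`
and the quotient `V/p` are Henselian local rings. -/
theorem stmt4 (V : Type*) [CommRing V] [IsDomain V] [ValuationRing V]
    [HenselianLocalRing V] (p : Ideal V) [p.IsPrime] :
    HenselianLocalRing (Localization.AtPrime p) ∧ HenselianLocalRing (V ⧸ p) :=
  ⟨loc_henselian V p, quot_henselian V p (Ideal.IsPrime.ne_top ‹_›)⟩
end

section
/- Let V be a valuation ring with maximal ideal m_V and let a ∈ m_V be a nonzero element. Then the localization V[1/a] = Localization.Away a is a valuation ring, and the a-adic completion V̂ᵃ = AdicCompletion (Ideal.span {a}) V is a valuation ring. -/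
open AdicCompletion

section Aux

variable {V : Type*} [CommRing V] [IsDomain V] [ValuationRing V] {a : V}

lemma aux_mem_iff (a : V) (n : ℕ) (x : V) :
    x ∈ ((Ideal.span {a}) ^ n • ⊤ : Ideal V) ↔ a ^ n ∣ x := by
  have h : ((Ideal.span {a}) ^ n • ⊤ : Ideal V) = (Ideal.span {a}) ^ n := by ext y; simp
  rw [h, Ideal.span_singleton_pow, Ideal.mem_span_singleton]

lemma aux_cauchy (f : AdicCauchySequence (Ideal.span {a}) V) {m n : ℕ} (h : m ≤ n) :
    a ^ m ∣ f n - f m := by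
  have hmem := (SModEq.sub_mem).mp (f.property h)
  rw [aux_mem_iff] at hmem
  exact (dvd_sub_comm).mp hmem

lemma aux_not_dvd (f : AdicCauchySequence (Ideal.span {a}) V) {m n : ℕ} (h : m ≤ n)
    (hm : ¬ a ^ m ∣ f m) : ¬ a ^ n ∣ f n := by
  intro hdvd
  have h1 : a ^ m ∣ f n := dvd_trans (pow_dvd_pow a h) hdvd
  have h2 := aux_cauchy f h
  exact hm (by simpa using dvd_sub h1 h2)

lemma aux_stab (f : AdicCauchySequence (Ideal.span {a}) V) {N : ℕ}
    (hN : ¬ a ^ N ∣ f N) :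
    ∃ b : V, ¬ IsUnit b ∧ a ^ N = f N * b ∧ ∀ m, N ≤ m → ∃ u : Vˣ, f m = f N * u := by
  rcases ValuationRing.dvd_total (a ^ N) (f N) with h | ⟨b, hb⟩
  · exact absurd h hN
  have hbu : ¬ IsUnit b := by
    intro h
    obtain ⟨c, hc⟩ := h.exists_right_inv
    exact hN ⟨c, by rw [hb, mul_assoc, hc, mul_one]⟩
  refine ⟨b, hbu, hb, ?_⟩
  · intro m hm
    obtain ⟨t, ht⟩ := aux_cauchy f hm
    have hbt : ¬ IsUnit (b * t) := fun h => hbu (isUnit_of_mul_isUnit_left h)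
    have hu : IsUnit (1 + b * t) := by
      have := IsLocalRing.isUnit_one_sub_self_of_mem_nonunits (-(b * t))
        (by simpa [mem_nonunits_iff, IsUnit.neg_iff] using hbt)
      simpa [sub_neg_eq_add] using this
    refine ⟨hu.unit, ?_⟩
    rw [IsUnit.unit_spec]
    linear_combination ht + t * hb

lemma aux_mk_eq (f g : AdicCauchySequence (Ideal.span {a}) V)
    (h : ∀ n, a ^ n ∣ f n - g n) : mkₐ (Ideal.span {a}) f = mkₐ (Ideal.span {a}) g := by
  ext n
  show Submodule.Quotient.mk (f n) = Submodule.Quotient.mk (g n)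
  rw [Submodule.Quotient.eq]
  exact (aux_mem_iff a n _).mpr (h n)

lemma aux_mk_eq_zero (f : AdicCauchySequence (Ideal.span {a}) V)
    (h : ∀ n, a ^ n ∣ f n) : mkₐ (Ideal.span {a}) f = 0 := by
  rw [show (0 : AdicCompletion (Ideal.span {a}) V) = mkₐ (Ideal.span {a}) 0 from (_root_.map_zero _).symm]
  exact aux_mk_eq f 0 (by simpa using h)

lemma aux_of_mk_eq_zero (f : AdicCauchySequence (Ideal.span {a}) V)
    (h : mkₐ (Ideal.span {a}) f = 0) (n : ℕ) : a ^ n ∣ f n := by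
  have := congrArg (fun x => x.val n) h
  have h2 : Submodule.Quotient.mk (p := ((Ideal.span {a}) ^ n • ⊤ : Submodule V V)) (f n) = 0 :=
    this
  rw [Submodule.Quotient.mk_eq_zero] at h2
  exact (aux_mem_iff a n _).mp h2

lemma aux_dvd_completion (f g : AdicCauchySequence (Ideal.span {a}) V) {N : ℕ}
    (hN : ¬ a ^ N ∣ f N) (hfg : f N ∣ g N) :
    mkₐ (Ideal.span {a}) f ∣ mkₐ (Ideal.span {a}) g := by
  obtain ⟨b, hb_nu, hb, hstab⟩ := aux_stab f hN
  have hfN0 : f N ≠ 0 := fun h => hN (h ▸ dvd_zero _)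
  obtain ⟨d, hd⟩ := hfg
  have key : ∀ n : ℕ, ∃ c : V, f (n + N) * c = g (n + N) := by
    intro n
    obtain ⟨u, hu⟩ := hstab (n + N) (Nat.le_add_left N n)
    obtain ⟨s, hs⟩ := aux_cauchy g (Nat.le_add_left N n)
    refine ⟨(u⁻¹ : Vˣ) * (d + b * s), ?_⟩
    have huu : (u : V) * (u⁻¹ : Vˣ) = 1 := u.mul_inv
    calc f (n + N) * ((u⁻¹ : Vˣ) * (d + b * s))
        = f N * ((u : V) * (u⁻¹ : Vˣ)) * (d + b * s) := by rw [hu]; ring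
      _ = f N * (d + b * s) := by rw [huu, mul_one]
      _ = g (n + N) := by linear_combination -hd - s * hb - hs
  choose c hc using key
  have hcau : ∀ n : ℕ, c n ≡ c (n + 1)
      [SMOD ((Ideal.span {a}) ^ n • ⊤ : Submodule V V)] := by
    intro n
    rw [SModEq.sub_mem]
    rw [show ((Ideal.span {a}) ^ n • ⊤ : Submodule V V)
      = ((Ideal.span {a}) ^ n • ⊤ : Ideal V) from rfl]
    rw [aux_mem_iff]
    obtain ⟨u, hu⟩ := hstab (n + N) (Nat.le_add_left N n)
    obtain ⟨s₁, hs₁⟩ := aux_cauchy g (show n + N ≤ n + 1 + N by omega)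
    obtain ⟨s₂, hs₂⟩ := aux_cauchy f (show n + N ≤ n + 1 + N by omega)
    have h1 : f (n + N) * (c n - c (n + 1)) = a ^ (n + N) * (s₂ * c (n + 1) - s₁) := by
      linear_combination hc n - hc (n + 1) - hs₁ + c (n + 1) * hs₂
    refine ⟨(u⁻¹ : Vˣ) * b * (s₂ * c (n + 1) - s₁), ?_⟩
    have hfm0 : f (n + N) ≠ 0 := by rw [hu]; exact mul_ne_zero hfN0 u.ne_zero
    apply mul_left_cancel₀ hfm0
    rw [h1]
    have hfN' : f N = f (n + N) * (u⁻¹ : Vˣ) := by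
      rw [hu, mul_assoc, u.mul_inv, mul_one]
    rw [pow_add, hb, hfN']
    ring
  refine ⟨mkₐ (Ideal.span {a}) (AdicCauchySequence.mk _ _ c hcau), ?_⟩
  rw [← map_mul]
  refine (aux_mk_eq _ _ ?_).symm
  intro n
  show a ^ n ∣ f n * c n - g n
  obtain ⟨s₁, hs₁⟩ := aux_cauchy f (by omega : n ≤ n + N)
  obtain ⟨s₂, hs₂⟩ := aux_cauchy g (by omega : n ≤ n + N)
  refine ⟨s₂ - s₁ * c n, ?_⟩
  linear_combination hc n - c n * hs₁ + hs₂

end Aux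

/-- For a valuation ring `V` and a nonzero `a` in the maximal ideal, the localization `V[1/a]`
and the `a`-adic completion `V̂ᵃ = AdicCompletion (Ideal.span {a}) V` are valuation rings
(in particular they are domains). -/
theorem stmt6 (V : Type*) [CommRing V] [IsDomain V] [ValuationRing V]
    (a : V) (ha : a ≠ 0) (ham : a ∈ IsLocalRing.maximalIdeal V) :
    (∃ h : IsDomain (Localization.Away a),
      @ValuationRing (Localization.Away a) _ h) ∧
    (∃ h : IsDomain (AdicCompletion (Ideal.span {a}) V),
      @ValuationRing (AdicCompletion (Ideal.span {a}) V) _ h) := by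
  have hanu : ¬ IsUnit a := ham
  constructor
  · -- Localization
    haveI hdom : IsDomain (Localization.Away a) :=
      IsLocalization.isDomain_of_le_nonZeroDivisors (S := Localization.Away a)
        (powers_le_nonZeroDivisors_of_noZeroDivisors ha)
    refine ⟨hdom, @ValuationRing.mk _ _ hdom ⟨fun x y => ?_⟩⟩
    obtain ⟨⟨r, s⟩, hx⟩ := IsLocalization.surj (Submonoid.powers a) x
    obtain ⟨⟨t, u⟩, hy⟩ := IsLocalization.surj (Submonoid.powers a) y
    dsimp only at hx hy
    set F := algebraMap V (Localization.Away a) with hF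
    have hsu : IsUnit (F s * F u) :=
      ((IsLocalization.map_units _ s).mul (IsLocalization.map_units _ u))
    rcases ValuationRing.dvd_total (r * (u : V)) (t * (s : V)) with ⟨c, hc⟩ | ⟨c, hc⟩
    · refine ⟨F c, Or.inl (hsu.mul_right_cancel ?_)⟩
      calc x * F c * (F s * F u)
          = (x * F s) * (F c * F u) := by ring
        _ = F r * (F c * F u) := by rw [hx]
        _ = F (r * (c * (u : V))) := by rw [← map_mul, ← map_mul]
        _ = F (t * (s : V)) := by rw [show r * (c * (u : V)) = t * (s : V) from by
              linear_combination -hc]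
        _ = F t * F s := by rw [map_mul]
        _ = (y * F u) * F s := by rw [hy]
        _ = y * (F s * F u) := by ring
    · refine ⟨F c, Or.inr (hsu.mul_right_cancel ?_)⟩
      calc y * F c * (F s * F u)
          = (y * F u) * (F c * F s) := by ring
        _ = F t * (F c * F s) := by rw [hy]
        _ = F (t * (c * (s : V))) := by rw [← map_mul, ← map_mul]
        _ = F (r * (u : V)) := by rw [show t * (c * (s : V)) = r * (u : V) from by
              linear_combination -hc]
        _ = F r * F u := by rw [map_mul]
        _ = (x * F s) * F u := by rw [hx]
        _ = x * (F s * F u) := by ring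
  · -- Completion
    set I : Ideal V := Ideal.span {a} with hI
    -- nontriviality
    haveI hnt : Nontrivial (AdicCompletion I V) := by
      refine ⟨1, 0, fun h10 => ?_⟩
      have h1 : mkₐ I (1 : AdicCauchySequence I V) = 0 := by rwa [map_one]
      have := aux_of_mk_eq_zero _ h1 1
      simp only [one_apply, pow_one] at this
      exact hanu (isUnit_of_dvd_one this)
    -- no zero divisors
    haveI hnzd : NoZeroDivisors (AdicCompletion I V) := by
      refine ⟨fun {x y} hxy => ?_⟩
      by_contra hcon
      push_neg at hcon
      obtain ⟨hx0, hy0⟩ := hcon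
      obtain ⟨f, hf⟩ := AdicCompletion.mk_surjective I V x
      obtain ⟨g, hg⟩ := AdicCompletion.mk_surjective I V y
      have hf' : mkₐ I f = x := hf
      have hg' : mkₐ I g = y := hg
      have hfex : ∃ n, ¬ a ^ n ∣ f n := by
        by_contra hall; push_neg at hall
        exact hx0 (hf' ▸ aux_mk_eq_zero f hall)
      have hgex : ∃ n, ¬ a ^ n ∣ g n := by
        by_contra hall; push_neg at hall
        exact hy0 (hg' ▸ aux_mk_eq_zero g hall)
      obtain ⟨N₁, hN₁⟩ := hfex
      obtain ⟨N₂, hN₂⟩ := hgex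
      set N := max N₁ N₂ with hN
      have hfN : ¬ a ^ N ∣ f N := aux_not_dvd f (le_max_left _ _) hN₁
      have hgN : ¬ a ^ N ∣ g N := aux_not_dvd g (le_max_right _ _) hN₂
      obtain ⟨b, hbnu, hb, hstabf⟩ := aux_stab f hfN
      obtain ⟨b', hbnu', hb', hstabg⟩ := aux_stab g hgN
      have hfN0 : f N ≠ 0 := fun h => hfN (h ▸ dvd_zero _)
      have hgN0 : g N ≠ 0 := fun h => hgN (h ▸ dvd_zero _)
      obtain ⟨u, hu⟩ := hstabf (N + N) (by omega)
      obtain ⟨w, hw⟩ := hstabg (N + N) (by omega)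
      have hprod : mkₐ I (f * g) = 0 := by
        rw [map_mul, hf', hg', hxy]
      have hdvd := aux_of_mk_eq_zero _ hprod (N + N)
      rw [mul_apply, hu, hw] at hdvd
      obtain ⟨t, ht⟩ := hdvd
      -- f N * g N = a^(N+N) * (t * u⁻¹ * w⁻¹)
      have h2 : f N * g N = a ^ (N + N) * (t * (u⁻¹ : Vˣ) * (w⁻¹ : Vˣ)) := by
        have := congrArg (fun z => z * ((u⁻¹ : Vˣ) : V) * ((w⁻¹ : Vˣ) : V)) ht
        calc f N * g N = f N * (u : V) * ((u⁻¹ : Vˣ) : V) * (g N * (w : V) * ((w⁻¹ : Vˣ) : V))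
              := by rw [mul_assoc (f N) (u : V), u.mul_inv, mul_one,
                        mul_assoc (g N) (w : V), w.mul_inv, mul_one]
          _ = f N * (u : V) * (g N * (w : V)) * ((u⁻¹ : Vˣ) : V) * ((w⁻¹ : Vˣ) : V) := by ring
          _ = a ^ (N + N) * t * ((u⁻¹ : Vˣ) : V) * ((w⁻¹ : Vˣ) : V) := by rw [ht]
          _ = a ^ (N + N) * (t * (u⁻¹ : Vˣ) * (w⁻¹ : Vˣ)) := by ring
      set X : V := t * ((u⁻¹ : Vˣ) : V) * ((w⁻¹ : Vˣ) : V) with hX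
      have h3 : f N * g N * 1 = f N * g N * (b * b' * X) := by
        linear_combination h2 + (a ^ N * X) * hb' + (g N * b' * X) * hb
      have h4 : (1 : V) = b * b' * X :=
        mul_left_cancel₀ (mul_ne_zero hfN0 hgN0) h3
      exact hbnu (IsUnit.of_mul_eq_one (b' * X)
        (by rw [← mul_assoc]; exact h4.symm))
    haveI hdom : IsDomain (AdicCompletion I V) := NoZeroDivisors.to_isDomain _
    refine ⟨hdom, @ValuationRing.mk _ _ hdom ⟨fun x y => ?_⟩⟩
    by_cases hx0 : x = 0
    · exact ⟨0, Or.inr (by rw [mul_zero, hx0])⟩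
    by_cases hy0 : y = 0
    · exact ⟨0, Or.inl (by rw [mul_zero, hy0])⟩
    obtain ⟨f, hf⟩ := AdicCompletion.mk_surjective I V x
    obtain ⟨g, hg⟩ := AdicCompletion.mk_surjective I V y
    have hf' : mkₐ I f = x := hf
    have hg' : mkₐ I g = y := hg
    have hfex : ∃ n, ¬ a ^ n ∣ f n := by
      by_contra hall; push_neg at hall
      exact hx0 (hf' ▸ aux_mk_eq_zero f hall)
    have hgex : ∃ n, ¬ a ^ n ∣ g n := by
      by_contra hall; push_neg at hall
      exact hy0 (hg' ▸ aux_mk_eq_zero g hall)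
    obtain ⟨N₁, hN₁⟩ := hfex
    obtain ⟨N₂, hN₂⟩ := hgex
    set N := max N₁ N₂ with hN
    have hfN : ¬ a ^ N ∣ f N := aux_not_dvd f (le_max_left _ _) hN₁
    have hgN : ¬ a ^ N ∣ g N := aux_not_dvd g (le_max_right _ _) hN₂
    rcases ValuationRing.dvd_total (f N) (g N) with hdvd | hdvd
    · obtain ⟨c, hc⟩ := aux_dvd_completion f g hfN hdvd
      exact ⟨c, Or.inl (by rw [← hf', ← hg', hc])⟩
    · obtain ⟨c, hc⟩ := aux_dvd_completion g f hgN hdvd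
      exact ⟨c, Or.inr (by rw [← hf', ← hg', hc])⟩
end

section
/- Let V be a valuation ring with maximal ideal m_V, let a ∈ m_V be a nonzero element, and let q := ⋂_{n>0} (aⁿ) be the prime ideal which is the intersection of the ideals generated by powers of a. Then the localization V[1/a] = Localization.Away a coincides with the localization of V at the prime q: the algebra map V → Localization.Away a exhibits Localization.Away a as the localization of V at the complement of q (Mathlib: IsLocalization.AtPrime (Localization.Away a) q). -/
/-- For a valuation ring `V` and a nonzero `a` in the maximal ideal, with
`q := ⋂_{n>0} (aⁿ)` (a prime ideal), the localization `V[1/a]` as a `V`-algebra is the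
localization of `V` at the prime `q`. -/
theorem stmt7 (V : Type*) [CommRing V] [IsDomain V] [ValuationRing V]
    (a : V) (ha : a ≠ 0) (ham : a ∈ IsLocalRing.maximalIdeal V)
    (hq : (⨅ n : ℕ, (Ideal.span {a ^ (n + 1)} : Ideal V)).IsPrime) :
    haveI := hq
    IsLocalization.AtPrime (Localization.Away a)
      (⨅ n : ℕ, (Ideal.span {a ^ (n + 1)} : Ideal V)) := by
  haveI := hq
  set q : Ideal V := ⨅ n : ℕ, (Ideal.span {a ^ (n + 1)} : Ideal V) with hqdef
  have hle : Submonoid.powers a ≤ q.primeCompl := by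
    rintro x ⟨k, rfl⟩ hx
    have hk : a ^ k ∈ Ideal.span {a ^ (k + 1)} := by
      have := Ideal.mem_iInf.mp hx k
      exact this
    rw [Ideal.mem_span_singleton] at hk
    obtain ⟨c, hc⟩ := hk
    have : (1 : V) = a * c := by
      have hak : (a : V) ^ k ≠ 0 := pow_ne_zero _ ha
      apply mul_left_cancel₀ hak
      rw [mul_one, ← mul_assoc]
      rw [pow_succ] at hc
      linear_combination hc
    have : IsUnit a := IsUnit.of_mul_eq_one c this.symm
    exact (IsLocalRing.maximalIdeal.isMaximal V).ne_top
      (Ideal.eq_top_of_isUnit_mem _ ham this)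
  exact IsLocalization.isLocalization_of_is_exists_mul_mem _ (Submonoid.powers a)
    q.primeCompl hle (by
      rintro ⟨x, hx⟩
      simp only [Ideal.primeCompl, Submonoid.mem_mk, Subsemigroup.mem_mk, Set.mem_compl_iff,
        SetLike.mem_coe] at hx
      rw [hqdef, Ideal.mem_iInf] at hx
      push_neg at hx
      obtain ⟨n, hn⟩ := hx
      rw [Ideal.mem_span_singleton] at hn
      rcases ValuationRing.dvd_total x (a ^ (n + 1)) with ⟨m, hm⟩ | h
      · exact ⟨m, ⟨n + 1, by show a ^ (n + 1) = m * x; linear_combination hm⟩⟩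
      · exact absurd h hn)
end

section
/- Let V be a valuation ring with maximal ideal m_V, let a ∈ m_V be a nonzero element, and let C := AdicCompletion (Ideal.span {a}) V be the a-adic completion of V, with ā the image of a in C. Then the localization C[1/ā] = Localization.Away ā is a field, and the natural map C → C[1/ā] is injective; consequently C[1/ā] is the fraction field of C (i.e., IsFractionRing C (Localization.Away ā) holds). -/
set_option linter.unusedSectionVars false

noncomputable section Stmt8Aux

open AdicCompletion

namespace Stmt8Aux

variable {V : Type*} [CommRing V] [IsDomain V] [ValuationRing V] {a : V}

theorem mem_iff (n : ℕ) (x : V) :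
    x ∈ ((Ideal.span {a}) ^ n • ⊤ : Ideal V) ↔ a ^ n ∣ x := by
  have h : ((Ideal.span {a}) ^ n • ⊤ : Ideal V) = (Ideal.span {a}) ^ n := by ext y; simp
  rw [h, Ideal.span_singleton_pow, Ideal.mem_span_singleton]

/-- Build an element of the adic completion from a Cauchy sequence of elements of `V`. -/
def seq (f : ℕ → V) (hf : ∀ m n : ℕ, m ≤ n → a ^ m ∣ f n - f m) :
    AdicCompletion (Ideal.span {a}) V :=
  ⟨fun n => Ideal.Quotient.mk _ (f n), by
    intro m n hmn
    rw [transitionMap_ideal_mk, Ideal.Quotient.mk_eq_mk_iff_sub_mem, mem_iff]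
    exact hf m n hmn⟩

@[simp]
theorem seq_val (f : ℕ → V) (hf) (n : ℕ) :
    (seq f hf).val n = Ideal.Quotient.mk ((Ideal.span {a}) ^ n • ⊤ : Ideal V) (f n) := rfl

theorem val_algebraMap (r : V) (n : ℕ) :
    ((algebraMap V (AdicCompletion (Ideal.span {a}) V)) r).val n =
      Ideal.Quotient.mk ((Ideal.span {a}) ^ n • ⊤ : Ideal V) r := rfl

theorem exists_lift (x : AdicCompletion (Ideal.span {a}) V) :
    ∃ f : ℕ → V, ∀ n, Ideal.Quotient.mk ((Ideal.span {a}) ^ n • ⊤ : Ideal V) (f n) = x.val n := by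
  choose f hf using fun n => Ideal.Quotient.mk_surjective (I := (Ideal.span {a}) ^ n • ⊤) (x.val n)
  exact ⟨f, hf⟩

theorem lift_eq_of_le {x : AdicCompletion (Ideal.span {a}) V} {f : ℕ → V}
    (hf : ∀ n, Ideal.Quotient.mk ((Ideal.span {a}) ^ n • ⊤ : Ideal V) (f n) = x.val n)
    {m n : ℕ} (hmn : m ≤ n) :
    Ideal.Quotient.mk ((Ideal.span {a}) ^ m • ⊤ : Ideal V) (f n) = x.val m := by
  have := x.property hmn
  rw [← hf n, transitionMap_ideal_mk] at this
  exact this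

theorem lift_compat {x : AdicCompletion (Ideal.span {a}) V} {f : ℕ → V}
    (hf : ∀ n, Ideal.Quotient.mk ((Ideal.span {a}) ^ n • ⊤ : Ideal V) (f n) = x.val n)
    {m n : ℕ} (hmn : m ≤ n) : a ^ m ∣ f n - f m := by
  rw [← mem_iff, ← Ideal.Quotient.mk_eq_mk_iff_sub_mem]
  rw [lift_eq_of_le hf hmn, hf m]

/-- Lemma A: an element whose first component is nonzero divides `ā ^ 2`. -/
theorem dvd_sq (ha : a ≠ 0) (x : AdicCompletion (Ideal.span {a}) V)
    (hx : x.val 1 ≠ 0) :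
    ∃ q, x * q = (algebraMap V (AdicCompletion (Ideal.span {a}) V) a) ^ 2 := by
  obtain ⟨v, hv⟩ := exists_lift x
  -- a does not divide v 1
  have hv1 : ¬ a ∣ v 1 := by
    intro hdvd
    apply hx
    rw [← hv 1, Ideal.Quotient.eq_zero_iff_mem, mem_iff, pow_one]
    exact hdvd
  -- each v (n+1) divides a
  have hdvd : ∀ n : ℕ, v (n + 1) ∣ a := by
    intro n
    rcases ValuationRing.dvd_total (v (n + 1)) a with h | h
    · exact h
    · exfalso
      apply hv1
      have h1 : a ∣ v (n + 1) - v 1 := by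
        simpa [pow_one] using lift_compat hv (show 1 ≤ n + 1 by omega)
      have := h.sub h1
      rwa [sub_sub_cancel] at this
  choose t ht using hdvd
  -- ht : ∀ n, a = v (n+1) * t n
  have hq : ∀ m n : ℕ, m ≤ n → a ^ m ∣ a * t n - a * t m := by
    intro m n hmn
    have key : a ^ 2 * (a * t n - a * t m) =
        a ^ 2 * (t m * t n * (v (m + 1) - v (n + 1))) := by
      have hwm : a = v (m + 1) * t m := ht m
      have hwn : a = v (n + 1) * t n := ht n
      linear_combination (a ^ 2 * t n) * hwm - (a ^ 2 * t m) * hwn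
    have heq : a * t n - a * t m = t m * t n * (v (m + 1) - v (n + 1)) :=
      mul_left_cancel₀ (pow_ne_zero 2 ha) key
    rw [heq]
    have h1 : a ^ m ∣ v (m + 1) - v (n + 1) := by
      have := lift_compat hv (show m + 1 ≤ n + 1 by omega)
      have h2 : a ^ m ∣ v (n + 1) - v (m + 1) :=
        dvd_trans (pow_dvd_pow a (Nat.le_succ m)) this
      simpa using h2.neg_right
    exact h1.mul_left _
  refine ⟨seq (fun n => a * t n) hq, ?_⟩
  ext n
  rw [val_mul]
  have hx_n : x.val n = Ideal.Quotient.mk ((Ideal.span {a}) ^ n • ⊤ : Ideal V) (v (n + 1)) := by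
    rw [← lift_eq_of_le hv (Nat.le_succ n)]
  rw [hx_n, seq_val, ← map_mul]
  have : ((algebraMap V (AdicCompletion (Ideal.span {a}) V) a) ^ 2).val n =
      Ideal.Quotient.mk ((Ideal.span {a}) ^ n • ⊤ : Ideal V) (a * a) := by
    rw [pow_two, val_mul, val_algebraMap, ← map_mul]
  rw [this]
  congr 1
  linear_combination (-a) * ht n

/-- Lemma B: an element whose first component is zero is divisible by `ā`. -/
theorem eq_mul_of_val_one_eq_zero (ha : a ≠ 0) (x : AdicCompletion (Ideal.span {a}) V)
    (hx : x.val 1 = 0) :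
    ∃ s, x = algebraMap V (AdicCompletion (Ideal.span {a}) V) a * s := by
  obtain ⟨v, hv⟩ := exists_lift x
  have hdvd : ∀ n : ℕ, a ∣ v (n + 1) := by
    intro n
    have h1 : Ideal.Quotient.mk ((Ideal.span {a}) ^ 1 • ⊤ : Ideal V) (v (n + 1)) = 0 := by
      rw [lift_eq_of_le hv (show 1 ≤ n + 1 by omega), hx]
    rw [Ideal.Quotient.eq_zero_iff_mem, mem_iff, pow_one] at h1
    exact h1
  choose σ hσ using hdvd
  -- hσ : v (n+1) = a * σ n
  have hcomp : ∀ m n : ℕ, m ≤ n → a ^ m ∣ σ n - σ m := by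
    intro m n hmn
    have h1 : a ^ (m + 1) ∣ v (n + 1) - v (m + 1) :=
      lift_compat hv (show m + 1 ≤ n + 1 by omega)
    rw [hσ n, hσ m, ← mul_sub] at h1
    rw [pow_succ'] at h1
    exact (mul_dvd_mul_iff_left ha).mp h1
  refine ⟨seq σ hcomp, ?_⟩
  ext n
  rw [val_mul, val_algebraMap, seq_val, ← map_mul, ← hσ n]
  rw [← lift_eq_of_le hv (Nat.le_succ n)]

/-- Lemma C: every element with a nonzero component divides a power of `ā`. -/
theorem dvd_pow_of_val_ne_zero (ha : a ≠ 0) :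
    ∀ n : ℕ, ∀ x : AdicCompletion (Ideal.span {a}) V, x.val n ≠ 0 →
      ∃ k : ℕ, x ∣ (algebraMap V (AdicCompletion (Ideal.span {a}) V) a) ^ k := by
  intro n
  induction n with
  | zero =>
    intro x hx
    exfalso
    obtain ⟨v, hv⟩ := exists_lift x
    apply hx
    rw [← hv 0, Ideal.Quotient.eq_zero_iff_mem, mem_iff, pow_zero]
    exact one_dvd _
  | succ n ih =>
    intro x hx
    by_cases h1 : x.val 1 = 0
    · obtain ⟨s, rfl⟩ := eq_mul_of_val_one_eq_zero ha x h1
      have hs : s.val n ≠ 0 := by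
        intro h0
        apply hx
        obtain ⟨σ, hσ⟩ := exists_lift s
        have hσn : a ^ n ∣ σ (n + 1) := by
          have := lift_eq_of_le hσ (Nat.le_succ n)
          rw [h0, Ideal.Quotient.eq_zero_iff_mem, mem_iff] at this
          exact this
        rw [val_mul, val_algebraMap, ← hσ (n + 1), ← map_mul,
          Ideal.Quotient.eq_zero_iff_mem, mem_iff, pow_succ']
        exact mul_dvd_mul_left a hσn
      obtain ⟨k, hk⟩ := ih s hs
      exact ⟨k + 1, by rw [pow_succ']; exact mul_dvd_mul_left _ hk⟩
    · obtain ⟨q, hq⟩ := dvd_sq ha x h1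
      exact ⟨2, Dvd.intro q hq⟩

theorem algebraMap_pow_ne_zero (ha : a ≠ 0) (ham : a ∈ IsLocalRing.maximalIdeal V) (k : ℕ) :
    (algebraMap V (AdicCompletion (Ideal.span {a}) V) a) ^ k ≠ 0 := by
  intro h0
  have h1 : ((algebraMap V (AdicCompletion (Ideal.span {a}) V) a) ^ k).val (k + 1) = 0 := by
    rw [h0]; rfl
  rw [← map_pow, val_algebraMap, Ideal.Quotient.eq_zero_iff_mem, mem_iff] at h1
  obtain ⟨u, hu⟩ := h1
  rw [pow_succ, mul_assoc] at hu
  have h2 : (1 : V) = a * u := mul_left_cancel₀ (pow_ne_zero k ha) (by rw [mul_one]; exact hu)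
  have h3 : IsUnit a := IsUnit.of_mul_eq_one u h2.symm
  exact (IsLocalRing.maximalIdeal.isMaximal V).ne_top (Ideal.eq_top_of_isUnit_mem _ ham h3)

end Stmt8Aux

end Stmt8Aux

set_option maxHeartbeats 1000000 in
set_option synthInstance.maxHeartbeats 400000 in
/-- For a valuation ring `V`, a nonzero `a` in the maximal ideal, and the `a`-adic completion
`C := AdicCompletion (Ideal.span {a}) V` with `ā` the image of `a` in `C`: the localization
`C[1/ā]` is a field, the map `C → C[1/ā]` is injective, and `C[1/ā]` is the fraction field
of `C`. -/
theorem stmt8 (V : Type*) [CommRing V] [IsDomain V] [ValuationRing V]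
    (a : V) (ha : a ≠ 0) (ham : a ∈ IsLocalRing.maximalIdeal V) :
    IsField (Localization.Away
        (algebraMap V (AdicCompletion (Ideal.span {a}) V) a)) ∧
    Function.Injective (algebraMap (AdicCompletion (Ideal.span {a}) V)
        (Localization.Away (algebraMap V (AdicCompletion (Ideal.span {a}) V) a))) ∧
    IsFractionRing (AdicCompletion (Ideal.span {a}) V)
        (Localization.Away (algebraMap V (AdicCompletion (Ideal.span {a}) V) a)) := by
  set C := AdicCompletion (Ideal.span {a}) V with hC
  set ab := algebraMap V C a with hab
  set L := Localization.Away ab with hL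
  have hne : ∀ k : ℕ, ab ^ k ≠ 0 := Stmt8Aux.algebraMap_pow_ne_zero ha ham
  have hCnt : Nontrivial C := nontrivial_of_ne ab 0 (by simpa using hne 1)
  -- every nonzero element of C maps to a unit of L
  have hmapunit : ∀ x : C, x ≠ 0 → IsUnit (algebraMap C L x) := by
    intro x hx
    have hnn : ∃ n, x.val n ≠ 0 := by
      by_contra h
      push_neg at h
      exact hx (AdicCompletion.ext fun n => by rw [h n]; rfl)
    obtain ⟨n, hn⟩ := hnn
    obtain ⟨k, c, hc⟩ := Stmt8Aux.dvd_pow_of_val_ne_zero ha n x hn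
    have hu : IsUnit (algebraMap C L (ab ^ k)) := by
      rw [map_pow]
      exact (IsLocalization.Away.algebraMap_isUnit ab).pow k
    rw [hc, map_mul] at hu
    exact isUnit_of_mul_isUnit_left hu
  have h10 : (1 : L) ≠ 0 := by
    intro h
    have h0 : algebraMap C L ab = 0 := by
      calc algebraMap C L ab = algebraMap C L ab * 1 := (mul_one _).symm
      _ = 0 := by rw [h, mul_zero]
    rw [IsLocalization.map_eq_zero_iff (Submonoid.powers ab) L ab] at h0
    obtain ⟨⟨m, k, rfl⟩, hm⟩ := h0
    exact hne (k + 1) (by rw [pow_succ]; exact hm)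
  have hinj : Function.Injective (algebraMap C L) := by
    intro x y hxy
    by_contra hne'
    have hsub : x - y ≠ 0 := sub_ne_zero.mpr hne'
    have hu := hmapunit _ hsub
    rw [map_sub, hxy, sub_self] at hu
    exact h10 (isUnit_zero_iff.mp hu).symm
  have hunit : ∀ z : L, z ≠ 0 → IsUnit z := by
    intro z hz
    obtain ⟨k, x, hzx⟩ := IsLocalization.Away.surj ab z
    have hx : x ≠ 0 := by
      rintro rfl
      rw [map_zero] at hzx
      have hk : IsUnit (algebraMap C L ab ^ k) :=
        (IsLocalization.Away.algebraMap_isUnit ab).pow k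
      obtain ⟨u, hu⟩ := hk
      apply hz
      calc z = z * (↑u * ↑u⁻¹) := by rw [Units.mul_inv, mul_one]
      _ = (z * algebraMap C L ab ^ k) * ↑u⁻¹ := by rw [← hu]; ring
      _ = 0 := by rw [hzx, zero_mul]
    obtain ⟨u, hu⟩ := hmapunit x hx
    refine IsUnit.of_mul_eq_one (algebraMap C L ab ^ k * ↑u⁻¹) ?_
    rw [← mul_assoc, hzx, ← hu, Units.mul_inv]
  have hfield : IsField L := by
    refine ⟨⟨1, 0, h10⟩, mul_comm, ?_⟩
    intro z hz
    obtain ⟨u, hu⟩ := hunit z hz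
    exact ⟨↑u⁻¹, by rw [← hu, Units.mul_inv]⟩
  have hnzd : ∀ s : C, s ≠ 0 → s ∈ nonZeroDivisors C := by
    intro s hs
    rw [mem_nonZeroDivisors_iff_right]
    intro c hc
    obtain ⟨u, hu⟩ := hmapunit s hs
    have h0 : algebraMap C L c * algebraMap C L s = 0 := by rw [← map_mul, hc, map_zero]
    rw [← hu] at h0
    have hmc : algebraMap C L c = 0 := by
      calc algebraMap C L c = (algebraMap C L c * ↑u) * ↑u⁻¹ := by
            rw [mul_assoc, Units.mul_inv, mul_one]
      _ = 0 := by rw [h0, zero_mul]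
    exact hinj (by rw [hmc, map_zero])
  have hfr : IsFractionRing C L := by
    constructor
    constructor
    · rintro ⟨y, hy⟩
      exact hmapunit y (nonZeroDivisors.ne_zero hy)
    · intro z
      obtain ⟨k, x, hzx⟩ := IsLocalization.Away.surj ab z
      refine ⟨⟨x, ⟨ab ^ k, hnzd _ (hne k)⟩⟩, ?_⟩
      simpa only [map_pow] using hzx
    · intro x y hxy
      exact ⟨1, by rw [hinj hxy]⟩
  exact ⟨hfield, hinj, hfr⟩
end

section
/- Let V be a valuation ring with maximal ideal m_V, let a ∈ m_V be a nonzero element, let C := AdicCompletion (Ideal.span {a}) V be the a-adic completion of V with ā the image of a in C, and let L := Localization.Away ā be the localization of C away from ā. Then V is isomorphic to the fiber product V[1/a] ×_L C: the ring homomorphism V → (Localization.Away a) × C, given componentwise by the localization map and the completion map, is injective, and its image is exactly the set of pairs (x, y) such that the image of x under the induced map Localization.Away a → L (the localization away-map of V → C) equals the image of y under the localization map C → L. -/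
set_option linter.unusedSectionVars false

/-- The image of `a` in the `a`-adic completion is a nonzerodivisor (for a domain `V`). -/
lemma aux_regular {V : Type*} [CommRing V] [IsDomain V] (a : V) (ha : a ≠ 0)
    (y : AdicCompletion (Ideal.span {a}) V)
    (h : algebraMap V (AdicCompletion (Ideal.span {a}) V) a * y = 0) : y = 0 := by
  obtain ⟨f, rfl⟩ := AdicCompletion.mk_surjective (Ideal.span {a}) V y
  rw [← Algebra.smul_def, ← map_smul] at h
  have hdvd : ∀ n, a ^ n ∣ a * f n := by
    intro n
    have h2 := congrArg (fun z => z.val n) h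
    simp only [AdicCompletion.mk_apply_coe, Submodule.mkQ_apply, AdicCompletion.val_zero, Pi.zero_apply,
      AdicCompletion.AdicCauchySequence.smul_apply, smul_eq_mul,
      Submodule.Quotient.mk_eq_zero] at h2
    rwa [Ideal.mul_top, Ideal.span_singleton_pow, Ideal.mem_span_singleton] at h2
  apply AdicCompletion.ext
  intro n
  rw [AdicCompletion.mk_apply_coe, Submodule.mkQ_apply, AdicCompletion.val_zero, Pi.zero_apply,
    ← AdicCompletion.AdicCauchySequence.mk_eq_mk (Nat.le_succ n),
    Submodule.Quotient.mk_eq_zero]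
  obtain ⟨c, hc⟩ := hdvd (n + 1)
  have h2 : f (n + 1) = a ^ n * c := by
    apply mul_left_cancel₀ ha
    rw [hc, pow_succ, mul_comm (a ^ n) a, mul_assoc]
  show f (n + 1) ∈ (Ideal.span {a} ^ n • ⊤ : Submodule V V)
  have hsm : (Ideal.span {a} ^ n • ⊤ : Ideal V) = Ideal.span {a} ^ n := by ext x; simp
  rw [hsm, Ideal.span_singleton_pow, Ideal.mem_span_singleton]
  exact ⟨c, h2⟩

/-- If `φ v` is divisible by `ā ^ n` in the completion, then `a ^ n ∣ v` in `V`. -/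
lemma aux_div {V : Type*} [CommRing V] [IsDomain V] (a : V) (v : V) (n : ℕ)
    (y : AdicCompletion (Ideal.span {a}) V)
    (h : algebraMap V (AdicCompletion (Ideal.span {a}) V) v =
      algebraMap V (AdicCompletion (Ideal.span {a}) V) a ^ n * y) :
    a ^ n ∣ v := by
  have h1 := congrArg (AdicCompletion.evalₐ (Ideal.span {a}) n) h
  rw [AlgHom.commutes, map_mul, map_pow, AlgHom.commutes] at h1
  have hz : (algebraMap V (V ⧸ Ideal.span {a} ^ n)) a ^ n = 0 := by
    rw [← map_pow, Ideal.Quotient.algebraMap_eq, Ideal.Quotient.eq_zero_iff_mem]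
    exact Ideal.pow_mem_pow (Ideal.mem_span_singleton_self a) n
  rw [hz, zero_mul, Ideal.Quotient.algebraMap_eq, Ideal.Quotient.eq_zero_iff_mem,
    Ideal.span_singleton_pow, Ideal.mem_span_singleton] at h1
  exact h1

/-- For a valuation ring `V`, a nonzero `a` in the maximal ideal, the `a`-adic completion
`C := AdicCompletion (Ideal.span {a}) V` with `ā` the image of `a`, and `L := C[1/ā]`:
`V` is the fiber product `V[1/a] ×_L C`, i.e. the map `V → V[1/a] × C` is injective with image
the pairs agreeing in `L`. -/
theorem stmt9 (V : Type*) [CommRing V] [IsDomain V] [ValuationRing V]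
    (a : V) (ha : a ≠ 0) (ham : a ∈ IsLocalRing.maximalIdeal V) :
    Function.Injective
      ((algebraMap V (Localization.Away a)).prod
        (algebraMap V (AdicCompletion (Ideal.span {a}) V))) ∧
    Set.range ((algebraMap V (Localization.Away a)).prod
        (algebraMap V (AdicCompletion (Ideal.span {a}) V))) =
      {xy : Localization.Away a × AdicCompletion (Ideal.span {a}) V |
        Localization.awayMap (algebraMap V (AdicCompletion (Ideal.span {a}) V)) a xy.1 =
          algebraMap (AdicCompletion (Ideal.span {a}) V)
            (Localization.Away
              (algebraMap V (AdicCompletion (Ideal.span {a}) V) a)) xy.2} := by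
  set C := AdicCompletion (Ideal.span {a}) V with hC
  set φ := algebraMap V C with hφ
  set L := Localization.Away (φ a) with hL
  -- injectivity of `V → V[1/a]`
  have hinj1 : Function.Injective (algebraMap V (Localization.Away a)) :=
    IsLocalization.injective _ (powers_le_nonZeroDivisors_of_noZeroDivisors ha)
  have hinj : Function.Injective
      ((algebraMap V (Localization.Away a)).prod φ) := by
    intro x y hxy
    exact hinj1 (congrArg Prod.fst hxy)
  -- `ā` is a nonzerodivisor in `C`, hence `C → L` is injective
  have hreg : φ a ∈ nonZeroDivisors C := by
    rw [mem_nonZeroDivisors_iff_right]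
    intro y hy
    exact aux_regular a ha y (by rwa [mul_comm])
  have hCL : Function.Injective (algebraMap C L) :=
    IsLocalization.injective _ (Submonoid.powers_le.mpr hreg)
  -- commutativity of the square
  have hcomm : ∀ v : V,
      Localization.awayMap φ a (algebraMap V (Localization.Away a) v) =
        algebraMap C L (φ v) := fun v =>
    IsLocalization.map_eq _ v
  refine ⟨hinj, ?_⟩
  ext ⟨x, y⟩
  simp only [Set.mem_range, Set.mem_setOf_eq, RingHom.prod_apply, Prod.mk.injEq]
  constructor
  · rintro ⟨v, hv1, hv2⟩
    rw [← hv1, ← hv2, hcomm]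
  · rintro h
    -- write `x = v / a ^ n`
    obtain ⟨⟨v, s⟩, hs⟩ := IsLocalization.surj (Submonoid.powers a) x
    obtain ⟨n, hn⟩ := s.property
    have hn' : a ^ n = (s : V) := hn
    have hs' : x * algebraMap V (Localization.Away a) (a ^ n) =
        algebraMap V (Localization.Away a) v := by rw [hn']; exact hs
    -- push the relation to `L` and descend to `C`
    have hL1 : algebraMap C L (φ v) = algebraMap C L (φ a ^ n * y) := by
      rw [← hcomm, ← hs', map_mul, hcomm, h, map_mul, map_pow]
      ring
    have hCy : φ v = φ a ^ n * y := hCL hL1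
    obtain ⟨w, hw⟩ := aux_div a v n y hCy
    -- `w` is the common element
    have hyw : φ w = y := by
      have hpow : φ a ^ n ∈ nonZeroDivisors C := pow_mem hreg n
      have hz : (φ w - y) * φ a ^ n = 0 := by
        have heq : φ w * φ a ^ n = y * φ a ^ n := by
          have h3 : φ (a ^ n * w) = φ a ^ n * y := by rw [← hw, hCy]
          rw [map_mul, map_pow] at h3
          rw [mul_comm (φ w), h3, mul_comm]
        rw [sub_mul, heq, sub_self]
      have := mem_nonZeroDivisors_iff_right.mp hpow _ hz
      exact sub_eq_zero.mp this
    have hxw : algebraMap V (Localization.Away a) w = x := by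
      have hu : IsUnit (algebraMap V (Localization.Away a) (a ^ n)) :=
        IsLocalization.map_units _ (⟨a ^ n, ⟨n, rfl⟩⟩ : Submonoid.powers a)
      apply hu.mul_right_cancel
      rw [← map_mul, mul_comm w (a ^ n), ← hw]
      exact hs'.symm
    exact ⟨w, hxw, hyw⟩
end

section
/- Let V be a valuation ring of finite Krull dimension n ≥ 1, let p ⊆ V be the unique prime ideal of height n−1, and let a ∈ m_V \ p. Then the a-adic completion V̂ᵃ = AdicCompletion (Ideal.span {a}) V is a Henselian local ring. -/
open IsLocalRing Polynomial AdicCompletion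

section AuxLemmas

/-- A local ring whose maximal ideal consists of nilpotents is Henselian. -/
theorem aux_nil_henselian (S : Type*) [CommRing S] [IsLocalRing S]
    (hnil : ∀ x ∈ maximalIdeal S, IsNilpotent x) : HenselianLocalRing S := by
  constructor
  intro f hf b₀ hb₀ hb₀'
  obtain ⟨N, hN⟩ := hnil _ hb₀
  clear hb₀
  induction N using Nat.strong_induction_on generalizing b₀ with
  | _ N ih =>
    rcases Nat.lt_or_ge N 2 with hN2 | hN2
    · interval_cases N
      · { rw [pow_zero] at hN; exact absurd hN one_ne_zero }
      · rw [pow_one] at hN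
        exact ⟨b₀, hN, by simp [Ideal.zero_mem]⟩
    · have hmem : f.eval b₀ ∈ maximalIdeal S := by
        rw [mem_maximalIdeal, mem_nonunits_iff]
        intro hu
        exact not_isUnit_zero (hN ▸ hu.pow N)
      set y : S := -(f.eval b₀ * Ring.inverse (f.derivative.eval b₀)) with hy
      have hymem : y ∈ maximalIdeal S := neg_mem (Ideal.mul_mem_right _ _ hmem)
      obtain ⟨k, hk⟩ := f.binomExpansion b₀ y
      have hb₁ : f.eval (b₀ + y) = k * y ^ 2 := by
        rw [hk, hy]
        rw [mul_neg, mul_comm (f.derivative.eval b₀), mul_assoc,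
          Ring.inverse_mul_cancel _ hb₀', mul_one]
        ring
      have hyN : y ^ N = 0 := by
        rw [hy, neg_pow, mul_pow, hN, zero_mul, mul_zero]
      set M := (N + 1) / 2 with hM
      have hMN : M < N := by omega
      have h2M : N ≤ 2 * M := by omega
      have hpow : f.eval (b₀ + y) ^ M = 0 := by
        rw [hb₁, mul_pow, ← pow_mul, show 2 * M = (2 * M - N) + N by omega, pow_add,
          hyN, mul_zero, mul_zero]
      have hunit' : IsUnit (f.derivative.eval (b₀ + y)) := by
        by_contra hnu
        obtain ⟨z, hz⟩ := f.derivative.sub_dvd_eval_sub (b₀ + y) b₀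
        have hd : f.derivative.eval (b₀ + y) - f.derivative.eval b₀ ∈ maximalIdeal S := by
          rw [hz, show b₀ + y - b₀ = y from by ring]
          exact Ideal.mul_mem_right _ _ hymem
        have h1 : f.derivative.eval (b₀ + y) ∈ maximalIdeal S := by
          rwa [mem_maximalIdeal, mem_nonunits_iff]
        have h2 := sub_mem h1 hd
        rw [sub_sub_cancel] at h2
        exact (mem_maximalIdeal _).mp h2 hb₀'
      obtain ⟨b, hb, hbmem⟩ := ih M hMN (b₀ + y) hunit' hpow
      refine ⟨b, hb, ?_⟩
      have h := add_mem hbmem hymem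
      rwa [show b - (b₀ + y) + y = b - b₀ from by ring] at h

theorem aux_dvd_of_val_eq_zero {V : Type*} [CommRing V] [IsDomain V] (a : V) (ha : a ≠ 0)
    (n : ℕ) (x : AdicCompletion (Ideal.span {a}) V) (hx : x.val n = 0) :
    ∃ y : AdicCompletion (Ideal.span {a}) V,
      x = (algebraMap V (AdicCompletion (Ideal.span {a}) V) (a ^ n)) * y := by
  revert x hx
  set I : Ideal V := Ideal.span {a} with hI
  intro x hx
  have hpow : ∀ k : ℕ, (I ^ k • ⊤ : Ideal V) = Ideal.span {a ^ k} := fun k => by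
    rw [smul_eq_mul, Ideal.mul_top, hI, Ideal.span_singleton_pow]
  -- choose lifts of `x.val (m + n)`
  have hsur : ∀ m : ℕ, ∃ v : V,
      (Ideal.Quotient.mk (I ^ (m + n) • ⊤ : Ideal V)) v = x.val (m + n) := fun m =>
    Ideal.Quotient.mk_surjective _
  choose xl hxl using hsur
  -- each lift is divisible by a ^ n
  have hmk : ∀ {m k : ℕ} (hmk : m ≤ k) (v : V),
      transitionMap I V hmk ((Ideal.Quotient.mk (I ^ k • ⊤ : Ideal V)) v)
        = (Ideal.Quotient.mk (I ^ m • ⊤ : Ideal V)) v := fun hmk v => by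
    simpa [Ideal.Quotient.mk_eq_mk, ← Submodule.mkQ_apply] using transitionMap_mk I V hmk v
  have hxlval : ∀ {m k : ℕ}, m ≤ k + n →
      (Ideal.Quotient.mk (I ^ m • ⊤ : Ideal V)) (xl k) = x.val m := by
    intro m k h
    have := x.property h
    rw [← this, ← hxl k, hmk h]
  have hdvd : ∀ m : ℕ, a ^ n ∣ xl m := by
    intro m
    rw [← Ideal.mem_span_singleton, ← hpow n, ← Ideal.Quotient.eq_zero_iff_mem,
      hxlval (show n ≤ m + n by omega), hx]
  choose u hu using hdvd
  have hcanc : ∀ {b c : V}, a ^ n * b = a ^ n * c → b = c := fun h =>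
    mul_left_cancel₀ (pow_ne_zero n ha) h
  have hudiff : ∀ {m k : ℕ}, m ≤ k → u k - u m ∈ (I ^ m • ⊤ : Ideal V) := by
    intro m k h
    have h1 : (Ideal.Quotient.mk (I ^ (m + n) • ⊤ : Ideal V)) (xl k - xl m) = 0 := by
      rw [map_sub, hxlval (show m + n ≤ k + n by omega), hxlval (le_refl (m + n)), sub_self]
    rw [Ideal.Quotient.eq_zero_iff_mem, hpow, Ideal.mem_span_singleton] at h1
    obtain ⟨t, ht⟩ := h1
    rw [hpow, Ideal.mem_span_singleton]
    refine ⟨t, hcanc ?_⟩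
    rw [mul_sub, ← hu k, ← hu m, ht]
    ring
  refine ⟨⟨fun m => Ideal.Quotient.mk (I ^ m • ⊤ : Ideal V) (u m), ?_⟩, ?_⟩
  · intro m k h
    rw [hmk h, Ideal.Quotient.mk_eq_mk_iff_sub_mem]
    exact hudiff h
  · apply AdicCompletion.ext
    intro m
    erw [val_mul]
    have hval : (algebraMap V (AdicCompletion I V) (a ^ n)).val m
        = Ideal.Quotient.mk (I ^ m • ⊤ : Ideal V) (a ^ n) := rfl
    rw [hval]
    show x.val m = Ideal.Quotient.mk _ (a ^ n) * Ideal.Quotient.mk _ (u m)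
    rw [← map_mul, ← hu m, hxlval (show m ≤ m + n by omega)]

theorem aux_isUnit_of_val_one {V : Type*} [CommRing V] [IsLocalRing V]
    (I : Ideal V) (hIm : I ≤ maximalIdeal V)
    (x : AdicCompletion I V) (hx : IsUnit (x.val 1)) : IsUnit x := by
  have hmk : ∀ {m k : ℕ} (hmk : m ≤ k) (v : V),
      transitionMap I V hmk ((Ideal.Quotient.mk (I ^ k • ⊤ : Ideal V)) v)
        = (Ideal.Quotient.mk (I ^ m • ⊤ : Ideal V)) v := fun hmk v => by
    simpa [Ideal.Quotient.mk_eq_mk, ← Submodule.mkQ_apply] using transitionMap_mk I V hmk v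
  have hu : ∀ m : ℕ, IsUnit (x.val m) := by
    intro m
    rcases Nat.eq_zero_or_pos m with rfl | hm
    · haveI : Subsingleton (V ⧸ (I ^ 0 • ⊤ : Ideal V)) := by
        rw [Submodule.Quotient.subsingleton_iff]
        simp
      exact IsUnit.of_mul_eq_one 1 (Subsingleton.elim _ _)
    · obtain ⟨v, hv⟩ := Ideal.Quotient.mk_surjective (I := (I ^ m • ⊤ : Ideal V)) (x.val m)
      obtain ⟨w₁, hw₁⟩ := hx.exists_right_inv
      obtain ⟨w, hw⟩ := Ideal.Quotient.mk_surjective (I := (I ^ 1 • ⊤ : Ideal V)) w₁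
      have hv1 : (Ideal.Quotient.mk (I ^ 1 • ⊤ : Ideal V)) v = x.val 1 := by
        rw [← x.property hm, ← hv, hmk hm]
      have hvw : 1 - v * w ∈ maximalIdeal V := by
        have h1 : (Ideal.Quotient.mk (I ^ 1 • ⊤ : Ideal V)) (1 - v * w) = 0 := by
          rw [map_sub, map_mul, hv1, hw, hw₁, map_one, sub_self]
        rw [Ideal.Quotient.eq_zero_iff_mem] at h1
        refine le_trans ?_ hIm h1
        rw [pow_one, smul_eq_mul, Ideal.mul_top]
      have hvwu : IsUnit (v * w) := by
        by_contra hnu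
        have h2 : v * w ∈ maximalIdeal V := hnu
        have := add_mem hvw h2
        rw [sub_add_cancel] at this
        exact (mem_maximalIdeal _).mp this isUnit_one
      have hvu : IsUnit v := isUnit_of_mul_isUnit_left hvwu
      exact hv ▸ hvu.map (Ideal.Quotient.mk _)
  -- construct the inverse
  have hcomp : ∀ {m k : ℕ} (h : m ≤ k),
      transitionMap I V h (↑(hu k).unit⁻¹) = ↑(hu m).unit⁻¹ := by
    intro m k h
    have h1 : transitionMap I V h (↑(hu k).unit⁻¹) * x.val m = 1 := by
      rw [← x.property h, ← transitionMap_map_mul]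
      rw [(hu k).val_inv_mul, transitionMap_map_one]
    have h2 := congrArg (· * (↑(hu m).unit⁻¹ : V ⧸ (I ^ m • ⊤ : Ideal V))) h1
    simp only [one_mul, mul_assoc] at h2
    rwa [(hu m).mul_val_inv, mul_one] at h2
  refine IsUnit.of_mul_eq_one (a := x) ⟨fun m => ↑(hu m).unit⁻¹, hcomp⟩ ?_
  apply AdicCompletion.ext
  intro m
  erw [val_mul]
  show x.val m * ↑(hu m).unit⁻¹ = (1 : AdicCompletion I V).val m
  rw [(hu m).mul_val_inv, val_one]

theorem aux_prime_eq_max (V : Type*) [CommRing V] [IsDomain V] [ValuationRing V]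
    (n : ℕ) (hn : 1 ≤ n) (hV : ringKrullDim V = n)
    (p : Ideal V) [hpp : p.IsPrime]
    (hp : ringKrullDim (Localization.AtPrime p) = (n - 1 : ℕ))
    (a : V) (hap : a ∉ p)
    (q : Ideal V) (hq : q.IsPrime) (haq : a ∈ q) : q = maximalIdeal V := by
  -- p < q
  have hpq : p < q := by
    rcases Std.Total.total (r := (· ≤ · : Ideal V → Ideal V → Prop)) p q with h | h
    · exact lt_of_le_of_ne h (fun h' => hap (h' ▸ haq))
    · exact absurd (h haq) hap
  have hqm : q ≤ maximalIdeal V := le_maximalIdeal hq.ne_top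
  by_contra hne
  have hqm' : q < maximalIdeal V := lt_of_le_of_ne hqm hne
  -- get a chain of length n - 1 in Spec(V_p)
  have hchain : ∃ c : LTSeries (PrimeSpectrum (Localization.AtPrime p)),
      (n - 1 : ℕ) ≤ c.length := by
    by_contra hno
    push_neg at hno
    have h0 : 0 < n - 1 := by
      simpa using hno (RelSeries.singleton _ (Classical.arbitrary _))
    have hle : ringKrullDim (Localization.AtPrime p) ≤ ((n - 2 : ℕ) : WithBot ℕ∞) := by
      rw [ringKrullDim, Order.krullDim_eq_iSup_length]
      rw [show ((n - 2 : ℕ) : WithBot ℕ∞) = ((n - 2 : ℕ) : ℕ∞) from rfl, WithBot.coe_le_coe]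
      refine iSup_le fun c => ?_
      have := hno c
      exact_mod_cast Nat.le_of_lt_succ (by omega : c.length < n - 2 + 1)
    rw [hp] at hle
    have : (n - 1 : ℕ) ≤ (n - 2 : ℕ) := by exact_mod_cast hle
    omega
  obtain ⟨c, hc⟩ := hchain
  -- push the chain into Spec V
  set f : PrimeSpectrum (Localization.AtPrime p) → PrimeSpectrum V :=
    fun s => PrimeSpectrum.comap (algebraMap V (Localization.AtPrime p)) s with hf
  have hmono : Monotone f := fun s t hst => Ideal.comap_mono hst
  have hinj : Function.Injective f :=
    PrimeSpectrum.localization_comap_injective (Localization.AtPrime p) p.primeCompl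
  have hstrict : StrictMono f := hmono.strictMono_of_injective hinj
  have hlep : ∀ s : PrimeSpectrum (Localization.AtPrime p), (f s).asIdeal ≤ p := by
    intro s x hx
    by_contra hxp
    have hu : IsUnit (algebraMap V (Localization.AtPrime p) x) :=
      IsLocalization.map_units (Localization.AtPrime p) (⟨x, hxp⟩ : p.primeCompl)
    exact s.isPrime.ne_top (Ideal.eq_top_of_isUnit_mem _ hx hu)
  set d : LTSeries (PrimeSpectrum V) := c.map f hstrict with hd
  have h1 : d.last < ⟨q, hq⟩ := by
    show d.last.asIdeal < q
    refine lt_of_le_of_lt ?_ hpq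
    rw [hd, LTSeries.last_map]
    exact hlep _
  have h2 : (d.snoc _ h1).last < ⟨maximalIdeal V, (maximalIdeal.isMaximal V).isPrime⟩ := by
    rw [RelSeries.last_snoc]
    exact hqm'
  set e : LTSeries (PrimeSpectrum V) := (d.snoc _ h1).snoc _ h2 with he
  have hlen := Order.LTSeries.length_le_krullDim e
  rw [← ringKrullDim, hV] at hlen
  have helen : e.length = c.length + 2 := by simp [he, hd]
  rw [helen] at hlen
  have : (c.length + 2 : ℕ) ≤ n := by exact_mod_cast hlen
  omega

end AuxLemmas

/-- For a valuation ring `V` of finite Krull dimension `n ≥ 1`, the prime `p ⊆ V` of height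
`n − 1` (height is encoded as the Krull dimension of `V_p`), and an element `a ∈ m_V \ p`,
the `a`-adic completion `AdicCompletion (Ideal.span {a}) V` is a Henselian local ring. -/
theorem stmt10 (V : Type*) [CommRing V] [IsDomain V] [ValuationRing V]
    (n : ℕ) (hn : 1 ≤ n) (hV : ringKrullDim V = n)
    (p : Ideal V) [p.IsPrime]
    (hp : ringKrullDim (Localization.AtPrime p) = (n - 1 : ℕ))
    (a : V) (ham : a ∈ IsLocalRing.maximalIdeal V) (hap : a ∉ p) :
    HenselianLocalRing (AdicCompletion (Ideal.span {a}) V) := by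
  classical
  have ha0 : a ≠ 0 := fun h => hap (h ▸ p.zero_mem)
  set I : Ideal V := Ideal.span {a} with hI
  set R := AdicCompletion I V with hR
  have haI : a ∈ I := Ideal.mem_span_singleton_self a
  have hIm : I ≤ maximalIdeal V := by
    rw [hI, Ideal.span_le, Set.singleton_subset_iff]; exact ham
  have hpowV : ∀ k : ℕ, (I ^ k • ⊤ : Ideal V) = Ideal.span {a ^ k} := fun k => by
    rw [smul_eq_mul, Ideal.mul_top, hI, Ideal.span_singleton_pow]
  -- every element of the maximal ideal is nilpotent mod I
  have hrad : ∀ x ∈ maximalIdeal V, ∃ k : ℕ, x ^ k ∈ I := by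
    intro x hx
    rw [show (∃ k : ℕ, x ^ k ∈ I) ↔ x ∈ I.radical from Iff.rfl.symm, Ideal.radical_eq_sInf]
    refine Submodule.mem_sInf.mpr fun J hJ => ?_
    obtain ⟨hIJ, hJp⟩ := hJ
    have := aux_prime_eq_max V n hn hV p hp a hap J hJp (hIJ haI)
    exact this ▸ hx
  -- the ring homomorphism to the first quotient
  let ev : R →+* V ⧸ (I ^ 1 • ⊤ : Ideal V) :=
    { toFun := fun x => x.val 1
      map_one' := rfl
      map_mul' := fun _ _ => rfl
      map_zero' := rfl
      map_add' := fun _ _ => rfl }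
  have hev : ∀ x : R, ev x = x.val 1 := fun _ => rfl
  have hevmk : ∀ v : V, ev (algebraMap V R v) = Ideal.Quotient.mk (I ^ 1 • ⊤ : Ideal V) v :=
    fun v => rfl
  -- S₁ is a local ring
  have hne : (I ^ 1 • ⊤ : Ideal V) ≠ ⊤ := by
    rw [hpowV, pow_one, ← hI]
    exact fun h => (maximalIdeal.isMaximal V).ne_top (top_le_iff.mp (h ▸ hIm))
  haveI : Nontrivial (V ⧸ (I ^ 1 • ⊤ : Ideal V)) := Ideal.Quotient.nontrivial_iff.mpr hne
  haveI hS₁loc : IsLocalRing (V ⧸ (I ^ 1 • ⊤ : Ideal V)) :=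
    IsLocalRing.of_surjective' (Ideal.Quotient.mk _) Ideal.Quotient.mk_surjective
  -- units in quotients of the local ring V
  have hmkunit : ∀ v : V, IsUnit (Ideal.Quotient.mk (I ^ 1 • ⊤ : Ideal V) v) → IsUnit v := by
    intro v hv
    obtain ⟨w₁, hw₁⟩ := hv.exists_right_inv
    obtain ⟨w, rfl⟩ := Ideal.Quotient.mk_surjective w₁
    rw [← map_mul] at hw₁
    have h1 : v * w - 1 ∈ maximalIdeal V := by
      refine hIm ?_
      have h2 : v * w - 1 ∈ (I ^ 1 • ⊤ : Ideal V) := by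
        rw [← Ideal.Quotient.mk_eq_mk_iff_sub_mem, map_one, hw₁]
      rwa [hpowV, pow_one, ← hI] at h2
    by_contra hnu
    have h2 : v * w ∈ maximalIdeal V :=
      (mem_maximalIdeal _).mpr fun hu => hnu (isUnit_of_mul_isUnit_left hu)
    have h3 := sub_mem h2 h1
    rw [sub_sub_cancel] at h3
    exact (mem_maximalIdeal _).mp h3 isUnit_one
  -- unit lifting from the first quotient to R
  have hUnit : ∀ x : R, IsUnit (ev x) → IsUnit x := fun x h =>
    aux_isUnit_of_val_one I hIm x h
  haveI : Nontrivial R := by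
    refine ⟨1, 0, fun h => ?_⟩
    have h1 : (1 : V ⧸ (I ^ 1 • ⊤ : Ideal V)) = 0 := by
      rw [← map_one ev, h, _root_.map_zero]
    exact one_ne_zero h1
  haveI hRloc : IsLocalRing R := IsLocalRing.of_isUnit_or_isUnit_one_sub_self (fun x => by
    rcases isUnit_or_isUnit_one_sub_self (ev x) with h | h
    · exact Or.inl (hUnit x h)
    · refine Or.inr (hUnit (1 - x) ?_)
      rw [_root_.map_sub, map_one]
      exact h)
  have hUnit' : ∀ x : R, x ∈ maximalIdeal R → ¬IsUnit (ev x) :=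
    fun x hx h => (mem_maximalIdeal x).mp hx (hUnit x h)
  -- S₁ is Henselian (its maximal ideal is nil)
  haveI hS₁h : HenselianLocalRing (V ⧸ (I ^ 1 • ⊤ : Ideal V)) := by
    refine aux_nil_henselian _ fun y hy => ?_
    obtain ⟨v, rfl⟩ := Ideal.Quotient.mk_surjective y
    have hv : v ∈ maximalIdeal V := by
      rw [mem_maximalIdeal, mem_nonunits_iff]
      exact fun hu => (mem_maximalIdeal _).mp hy (hu.map (Ideal.Quotient.mk _))
    obtain ⟨k, hk⟩ := hrad v hv
    refine ⟨k, ?_⟩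
    rw [← map_pow, Ideal.Quotient.eq_zero_iff_mem, hpowV, pow_one, ← hI]
    exact hk
  -- the adic completion is complete along (ahat)
  set ahat : R := algebraMap V R a with hahat
  set Jhat : Ideal R := Ideal.span {ahat} with hJhat
  have hJm : ∀ (k : ℕ) (x : R), x ∈ (Jhat ^ k • ⊤ : Submodule R R) ↔
      ∃ y : R, x = algebraMap V R (a ^ k) * y := by
    intro k x
    rw [smul_eq_mul, Ideal.mul_top, hJhat, Ideal.span_singleton_pow,
      Ideal.mem_span_singleton, hahat, ← map_pow]
    exact ⟨fun ⟨y, hy⟩ => ⟨y, hy⟩, fun ⟨y, hy⟩ => ⟨y, hy⟩⟩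
  have hvalzero : ∀ (k : ℕ) (y : R), (algebraMap V R (a ^ k) * y).val k = 0 := by
    intro k y
    rw [val_mul]
    have h0 : ((algebraMap V R (a ^ k)).val k) = 0 := by
      show Ideal.Quotient.mk (I ^ k • ⊤ : Ideal V) (a ^ k) = 0
      rw [Ideal.Quotient.eq_zero_iff_mem, hpowV]
      exact Ideal.mem_span_singleton_self _
    rw [h0, zero_mul]
  haveI hHaus : IsHausdorff Jhat R := by
    constructor
    intro x hx
    refine AdicCompletion.ext fun m => ?_
    obtain ⟨y, hy⟩ := (hJm m x).mp ((SModEq.zero).mp (hx m))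
    rw [val_zero_apply, hy, hvalzero]
  haveI hPre : IsPrecomplete Jhat R := by
    constructor
    intro f hf
    have hcomp : ∀ {m k : ℕ} (h : m ≤ k),
        transitionMap I V h ((f k).val k) = (f m).val m := by
      intro m k h
      rw [(f k).property h]
      obtain ⟨y, hy⟩ := (hJm m _).mp (SModEq.sub_mem.mp (hf h))
      have h2 : (f m).val m - (f k).val m = 0 := by
        erw [← val_sub_apply, hy, hvalzero]
      rw [sub_eq_zero] at h2
      exact h2.symm
    refine ⟨⟨fun k => (f k).val k, fun h => hcomp h⟩, fun k => ?_⟩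
    refine SModEq.sub_mem.mpr ?_
    have hv : ((f k - ⟨fun k => (f k).val k, fun h => hcomp h⟩ : R)).val k = 0 := by
      erw [val_sub_apply]
      show (f k).val k - (f k).val k = 0
      rw [sub_self]
    obtain ⟨y, hy⟩ := aux_dvd_of_val_eq_zero a ha0 k _ hv
    exact (hJm k _).mpr ⟨y, hy⟩
  haveI hAC : IsAdicComplete Jhat R := ⟨⟩
  haveI hHR : HenselianRing R Jhat := inferInstance
  -- conclude
  constructor
  intro f hf a₀ h₁ h₂
  set g : Polynomial (V ⧸ (I ^ 1 • ⊤ : Ideal V)) := f.map ev with hg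
  have hgm : g.Monic := hf.map ev
  have hevalg : ∀ x : R, g.eval (ev x) = ev (f.eval x) := fun x => by
    rw [hg, eval_map, eval₂_at_apply]
  have h1' : g.eval (ev a₀) ∈ maximalIdeal (V ⧸ (I ^ 1 • ⊤ : Ideal V)) := by
    rw [hevalg, mem_maximalIdeal, mem_nonunits_iff]
    exact hUnit' _ h₁
  have h2' : IsUnit (g.derivative.eval (ev a₀)) := by
    rw [hg, derivative_map, eval_map, eval₂_at_apply]
    exact h₂.map ev
  obtain ⟨b, hbroot, hbmem⟩ := hS₁h.is_henselian g hgm (ev a₀) h1' h2'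
  obtain ⟨c, hc⟩ := eval_surjective I V 1 (b - ev a₀)
  have hcev : ev c = b - ev a₀ := hc
  set a₁ : R := a₀ + c with ha₁
  have heva₁ : ev a₁ = b := by
    rw [ha₁, map_add, hcev]
    ring
  have hcmem : c ∈ maximalIdeal R := by
    rw [mem_maximalIdeal, mem_nonunits_iff]
    intro hu
    have h5 := hu.map ev
    rw [hcev] at h5
    exact (mem_maximalIdeal _).mp (sub_mem hbmem (Submodule.zero_mem _)) (by simpa using h5)
  have hfa₁ : f.eval a₁ ∈ Jhat := by
    have hv : (f.eval a₁).val 1 = 0 := by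
      show ev (f.eval a₁) = 0
      rw [← hevalg, heva₁]
      exact hbroot
    obtain ⟨y, hy⟩ := aux_dvd_of_val_eq_zero a ha0 1 (f.eval a₁) hv
    rw [hJhat, Ideal.mem_span_singleton, hahat]
    exact ⟨y, by rwa [pow_one] at hy⟩
  have hf'a₁ : IsUnit (f.derivative.eval a₁) := by
    refine hUnit _ ?_
    have he : ev (f.derivative.eval a₁) = g.derivative.eval b := by
      rw [hg, derivative_map, ← heva₁, eval_map, eval₂_at_apply]
    rw [he]
    by_contra hnu
    obtain ⟨z, hz⟩ := g.derivative.sub_dvd_eval_sub b (ev a₀)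
    have hd : g.derivative.eval b - g.derivative.eval (ev a₀) ∈
        maximalIdeal (V ⧸ (I ^ 1 • ⊤ : Ideal V)) := by
      rw [hz]
      exact Ideal.mul_mem_right _ _ hbmem
    have hb1 : g.derivative.eval b ∈ maximalIdeal (V ⧸ (I ^ 1 • ⊤ : Ideal V)) := by
      rwa [mem_maximalIdeal, mem_nonunits_iff]
    have h3 := sub_mem hb1 hd
    rw [sub_sub_cancel] at h3
    exact (mem_maximalIdeal _).mp h3 h2'
  have h₂'' : IsUnit (Ideal.Quotient.mk Jhat (f.derivative.eval a₁)) :=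
    hf'a₁.map _
  obtain ⟨aa, haroot, hamem⟩ := hHR.is_henselian f hf a₁ hfa₁ h₂''
  refine ⟨aa, haroot, ?_⟩
  have hJm' : Jhat ≤ maximalIdeal R := by
    rw [hJhat, Ideal.span_le, Set.singleton_subset_iff, SetLike.mem_coe,
      mem_maximalIdeal, mem_nonunits_iff]
    intro hu
    have h6 : IsUnit (ev ahat) := hu.map ev
    rw [hahat, hevmk] at h6
    exact (mem_maximalIdeal a).mp ham (hmkunit a h6)
  have h4 := add_mem (hJm' hamem) hcmem
  rwa [show aa - a₁ + c = aa - a₀ from by rw [ha₁]; ring] at h4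
end

section
/- Let V be a valuation ring with maximal ideal m_V, let a ∈ m_V be a nonzero element, let C := AdicCompletion (Ideal.span {a}) V be the a-adic completion with ā the image of a in C, and let L := Localization.Away ā (which is the fraction field of C). Then for every natural number n, the group GL_n(L) is the product of the image of GL_n(V[1/a]) and the image of GL_n(C): every invertible n×n matrix over L is a product g = h·k where h is the image of an invertible matrix over Localization.Away a (under the map Localization.Away a → L induced by V → C) and k is the image of an invertible matrix over C (under the localization map C → L). (This is the product formula G(Frac V̂ᵃ) = Im(G(V[1/a]))·G(V̂ᵃ) for G = GL_n.) -/
set_option maxHeartbeats 1000000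
set_option synthInstance.maxHeartbeats 400000

namespace Stmt13Aux

open AdicCompletion

variable {V : Type*} [CommRing V]

/-- A unit criterion: an element of the adic completion all of whose components are units
is a unit. -/
lemma isUnit_of_val (I : Ideal V) (u : AdicCompletion I V) (h : ∀ k, IsUnit (u.val k)) :
    IsUnit u := by
  choose w hw using fun k => (h k).exists_left_inv
  have compat : ∀ {m k : ℕ} (hmk : m ≤ k), transitionMap I V hmk (w k) = w m := by
    intro m k hmk
    have h1 : transitionMap I V hmk (w k) * u.val m = 1 := by
      rw [← u.property hmk, ← transitionMap_map_mul, hw k, transitionMap_map_one]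
    calc transitionMap I V hmk (w k)
        = transitionMap I V hmk (w k) * (u.val m * w m) := by rw [mul_comm (u.val m), hw m, mul_one]
      _ = (transitionMap I V hmk (w k) * u.val m) * w m := by ring
      _ = w m := by rw [h1, one_mul]
  refine IsUnit.of_mul_eq_one (a := u) ⟨w, fun {m k} hmk => compat hmk⟩ ?_
  ext k
  show u.val k * w k = 1
  rw [mul_comm, hw k]

lemma val_algebraMap (I : Ideal V) (r : V) (k : ℕ) :
    (algebraMap V (AdicCompletion I V) r).val k
      = Submodule.Quotient.mk (p := (I ^ k • ⊤ : Submodule V V)) r := rfl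

lemma mem_smul_top_iff {a : V} (m : ℕ) (x : V) :
    x ∈ ((Ideal.span {a}) ^ m • ⊤ : Submodule V V) ↔ a ^ m ∣ x := by
  have h : ((Ideal.span {a}) ^ m • ⊤ : Ideal V) = (Ideal.span {a}) ^ m := by ext y; simp
  rw [show ((Ideal.span {a}) ^ m • ⊤ : Submodule V V) = ((Ideal.span {a}) ^ m • ⊤ : Ideal V) from rfl,
    h, Ideal.span_singleton_pow, Ideal.mem_span_singleton]

lemma eq_pow_mul_of_val_eq_zero [IsDomain V] {a : V} (ha : a ≠ 0) (n : ℕ)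
    (c : AdicCompletion (Ideal.span {a}) V) (hc : c.val n = 0) :
    ∃ d, c = (algebraMap V (AdicCompletion (Ideal.span {a}) V) a) ^ n * d := by
  obtain ⟨f, rfl⟩ := mk_surjective (Ideal.span {a}) V c
  rw [mk_apply_coe, Submodule.mkQ_apply, Submodule.Quotient.mk_eq_zero] at hc
  have hfn : a ^ n ∣ f.val n := (mem_smul_top_iff n _).mp hc
  have key : ∀ m, a ^ n ∣ f.val (m + n) := by
    intro m
    have h1 : f.val n ≡ f.val (m + n)
        [SMOD ((Ideal.span {a}) ^ n • ⊤ : Submodule V V)] := f.property (n.le_add_left m)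
    have h2 : a ^ n ∣ f.val n - f.val (m + n) :=
      (mem_smul_top_iff n _).mp (SModEq.sub_mem.mp h1)
    simpa using dvd_sub hfn h2
  choose e he using key
  have hsucc : ∀ m, e m ≡ e (m + 1) [SMOD ((Ideal.span {a}) ^ m • ⊤ : Submodule V V)] := by
    intro m
    rw [SModEq.sub_mem, mem_smul_top_iff]
    have h3 : a ^ (n + m) ∣ f.val (m + n) - f.val (m + 1 + n) := by
      have h1 : f.val (m + n) ≡ f.val (m + 1 + n)
          [SMOD ((Ideal.span {a}) ^ (m + n) • ⊤ : Submodule V V)] := f.property (by omega)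
      have h2 := (mem_smul_top_iff (m + n) _).mp (SModEq.sub_mem.mp h1)
      rwa [add_comm n m]
    rw [he m, he (m + 1), ← mul_sub, pow_add] at h3
    exact (mul_dvd_mul_iff_left (pow_ne_zero n ha)).mp h3
  refine ⟨mk (Ideal.span {a}) V (AdicCauchySequence.mk (Ideal.span {a}) V e hsucc), ?_⟩
  ext k
  have h4 : ((algebraMap V (AdicCompletion (Ideal.span {a}) V) a) ^ n *
      mk (Ideal.span {a}) V (AdicCauchySequence.mk (Ideal.span {a}) V e hsucc)).val k
      = Ideal.Quotient.mk ((Ideal.span {a}) ^ k • ⊤ : Ideal V) (a ^ n * e k) := by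
    rw [val_mul, ← map_pow, val_algebraMap, mk_apply_coe, Submodule.mkQ_apply,
      Ideal.Quotient.mk_eq_mk, AdicCauchySequence.mk_coe, Ideal.Quotient.mk_eq_mk, ← map_mul]
  rw [h4, mk_apply_coe, Submodule.mkQ_apply, Ideal.Quotient.mk_eq_mk, Ideal.Quotient.eq]
  have h5 : a ^ k ∣ f.val k - f.val (k + n) := by
    have h1 : f.val k ≡ f.val (k + n)
        [SMOD ((Ideal.span {a}) ^ k • ⊤ : Submodule V V)] := f.property (by omega)
    exact (mem_smul_top_iff k _).mp (SModEq.sub_mem.mp h1)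
  have h6 : f.val k - a ^ n * e k = f.val k - f.val (k + n) := by rw [← he k]
  show f.val k - a ^ n * e k ∈ ((Ideal.span {a}) ^ k • ⊤ : Submodule V V)
  rw [mem_smul_top_iff, h6]
  exact h5

end Stmt13Aux

namespace Stmt13Aux

open AdicCompletion

variable {V : Type*} [CommRing V]

lemma exists_approx [IsDomain V] {a : V} (ha : a ≠ 0) (m : ℕ)
    (c : AdicCompletion (Ideal.span {a}) V) :
    ∃ (v : V) (d : AdicCompletion (Ideal.span {a}) V),
      c = algebraMap V (AdicCompletion (Ideal.span {a}) V) v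
        + (algebraMap V (AdicCompletion (Ideal.span {a}) V) a) ^ m * d := by
  obtain ⟨f, rfl⟩ := mk_surjective (Ideal.span {a}) V c
  have h0 : (mk (Ideal.span {a}) V f
      - algebraMap V (AdicCompletion (Ideal.span {a}) V) (f.val m)).val m = 0 := by
    show (mk (Ideal.span {a}) V f).val m
      - (algebraMap V (AdicCompletion (Ideal.span {a}) V) (f.val m)).val m = 0
    rw [mk_apply_coe, Submodule.mkQ_apply, val_algebraMap, sub_self]
  obtain ⟨d, hd⟩ := eq_pow_mul_of_val_eq_zero ha m _ h0
  exact ⟨f.val m, d, by rw [← hd]; ring⟩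

lemma eq_zero_of_forall_pow_dvd [IsDomain V] {a : V}
    (c : AdicCompletion (Ideal.span {a}) V)
    (h : ∀ m, ∃ d, c = (algebraMap V (AdicCompletion (Ideal.span {a}) V) a) ^ m * d) :
    c = 0 := by
  ext k
  obtain ⟨d, hd⟩ := h k
  rw [hd, val_mul, ← map_pow, val_algebraMap]
  have h1 : (Submodule.Quotient.mk (p := ((Ideal.span {a}) ^ k • ⊤ : Submodule V V)) (a ^ k)) = 0 :=
    (Submodule.Quotient.mk_eq_zero _).mpr ((mem_smul_top_iff k _).mpr dvd_rfl)
  rw [h1, zero_mul]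
  rfl

lemma isUnit_one_add_span {a : V} (x : AdicCompletion (Ideal.span {a}) V)
    (hx : x ∈ Ideal.span {algebraMap V (AdicCompletion (Ideal.span {a}) V) a}) :
    IsUnit (1 + x) := by
  rw [Ideal.mem_span_singleton] at hx
  obtain ⟨c, rfl⟩ := hx
  apply isUnit_of_val
  intro k
  show IsUnit (1 + (algebraMap V (AdicCompletion (Ideal.span {a}) V) a).val k * c.val k)
  have hnil : IsNilpotent ((algebraMap V (AdicCompletion (Ideal.span {a}) V) a).val k) := by
    refine ⟨k, ?_⟩
    rw [val_algebraMap, Ideal.Quotient.mk_eq_mk, ← map_pow]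
    exact Ideal.Quotient.eq_zero_iff_mem.mpr ((mem_smul_top_iff k _).mpr dvd_rfl)
  exact ((Commute.all _ _).isNilpotent_mul_right hnil).isUnit_one_add

end Stmt13Aux

namespace Stmt13Aux

lemma awayMap_algebraMap {R P : Type*} [CommRing R] [CommRing P] (f : R →+* P) (a : R) (x : R) :
    Localization.awayMap f a (algebraMap R (Localization.Away a) x)
      = algebraMap P (Localization.Away (f a)) (f x) := by
  unfold Localization.awayMap IsLocalization.Away.map
  exact IsLocalization.map_eq _ _

lemma isUnit_away_of_exists_not_dvd {V : Type*} [CommRing V] [IsDomain V] [ValuationRing V]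
    (a : V) (v : V) (hv : ∃ m, ¬ a ^ m ∣ v) :
    IsUnit (algebraMap V (Localization.Away a) v) := by
  classical
  have hm0 : ¬ a ^ (Nat.find hv) ∣ v := Nat.find_spec hv
  have hm0pos : Nat.find hv ≠ 0 := by
    intro h
    rw [h, pow_zero] at hm0
    exact hm0 (one_dvd v)
  obtain ⟨k, hk⟩ : ∃ k, Nat.find hv = k + 1 := ⟨Nat.find hv - 1, by omega⟩
  have hm0' : ¬ a ^ (k + 1) ∣ v := by rw [← hk]; exact hm0
  have hdvd : a ^ k ∣ v := by
    by_contra hcon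
    exact Nat.find_min hv (by omega) hcon
  obtain ⟨w, hw⟩ := hdvd
  have hnad : ¬ a ∣ w := by
    rintro ⟨t, rfl⟩
    exact hm0' ⟨t, by rw [hw, pow_succ]; ring⟩
  have hwa : w ∣ a := (ValuationRing.dvd_total w a).resolve_right hnad
  rw [hw, map_mul, map_pow]
  exact ((IsLocalization.Away.algebraMap_isUnit (S := Localization.Away a) a).pow _).mul
    (IsLocalization.Away.isUnit_of_dvd (x := a) hwa)

lemma isUnit_of_map_isUnit {V : Type*} [CommRing V] [IsDomain V] [ValuationRing V]
    (a : V) (ha : a ≠ 0)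
    [Nontrivial (Localization.Away (algebraMap V (AdicCompletion (Ideal.span {a}) V) a))]
    (x : Localization.Away a)
    (hx : IsUnit (Localization.awayMap (algebraMap V (AdicCompletion (Ideal.span {a}) V)) a x)) :
    IsUnit x := by
  obtain ⟨⟨r, s⟩, hrs⟩ := IsLocalization.surj (Submonoid.powers a) x
  have hs : IsUnit (algebraMap V (Localization.Away a) (s : V)) :=
    IsLocalization.map_units _ s
  suffices hr : IsUnit (algebraMap V (Localization.Away a) r) by
    obtain ⟨u, hu⟩ := hs
    have hxu : x = algebraMap V (Localization.Away a) r * ↑u⁻¹ := by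
      rw [Units.eq_mul_inv_iff_mul_eq, hu, ← hrs]
    rw [hxu]
    exact hr.mul u⁻¹.isUnit
  apply isUnit_away_of_exists_not_dvd
  by_contra hcon
  push_neg at hcon
  have h0 : algebraMap V (AdicCompletion (Ideal.span {a}) V) r = 0 := by
    apply eq_zero_of_forall_pow_dvd
    intro m
    obtain ⟨t, ht⟩ := hcon m
    exact ⟨algebraMap V (AdicCompletion (Ideal.span {a}) V) t, by rw [ht, map_mul, map_pow]⟩
  obtain ⟨m, hm⟩ := s.2
  have hsu : IsUnit (Localization.awayMap (algebraMap V (AdicCompletion (Ideal.span {a}) V)) a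
      (algebraMap V (Localization.Away a) (s : V))) := by
    rw [awayMap_algebraMap]
    exact IsLocalization.map_units
      (Localization.Away (algebraMap V (AdicCompletion (Ideal.span {a}) V) a))
      ⟨algebraMap V (AdicCompletion (Ideal.span {a}) V) (s : V),
        (Submonoid.mem_powers_iff _ _).mpr ⟨m, by rw [← map_pow (algebraMap V (AdicCompletion (Ideal.span {a}) V)) a m]; exact congrArg _ hm⟩⟩
  have hz : IsUnit (0 : Localization.Away
      (algebraMap V (AdicCompletion (Ideal.span {a}) V) a)) := by
    have := hx.mul hsu
    rwa [← map_mul, hrs, awayMap_algebraMap, h0, map_zero] at this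
  exact not_isUnit_zero hz

end Stmt13Aux

namespace Stmt13Aux

lemma mapMatrix_smul {R S : Type*} [CommRing R] [CommRing S] {m : Type*} [DecidableEq m]
    [Fintype m] (f : R →+* S) (r : R) (M : Matrix m m R) :
    f.mapMatrix (r • M) = f r • f.mapMatrix M := by
  ext i j
  simp [RingHom.mapMatrix_apply, Matrix.map_apply, Matrix.smul_apply, smul_eq_mul]

end Stmt13Aux

open scoped MatrixGroups

namespace Stmt13Aux

theorem key (V : Type*) [CommRing V] (C : Type*) [CommRing C] [Algebra V C]
    (a : V) (n : ℕ)
    (happrox : ∀ (m : ℕ) (c : C), ∃ (v : V) (d : C),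
        c = algebraMap V C v + (algebraMap V C a) ^ m * d)
    (hone : ∀ x : C, x ∈ Ideal.span {algebraMap V C a} → IsUnit (1 + x))
    (hloc : ∀ x : Localization.Away a,
        IsUnit (Localization.awayMap (algebraMap V C) a x) → IsUnit x)
    (g : GL (Fin n) (Localization.Away (algebraMap V C a))) :
    ∃ (h : GL (Fin n) (Localization.Away a)) (k : GL (Fin n) C),
      g = Units.map (RingHom.mapMatrix (Localization.awayMap (algebraMap V C) a)).toMonoidHom h *
          Units.map (RingHom.mapMatrix (algebraMap C (Localization.Away (algebraMap V C a)))).toMonoidHom k := by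
  classical
  have hψalg : ∀ x : V, (Localization.awayMap (algebraMap V C) a) (algebraMap V (Localization.Away a) x) = (algebraMap C (Localization.Away (algebraMap V C a))) ((algebraMap V C) x) :=
    fun x => Stmt13Aux.awayMap_algebraMap (algebraMap V C) a x
  obtain ⟨b, hb⟩ := IsLocalization.exist_integer_multiples_of_finite
    (Submonoid.powers (algebraMap V C a))
    (Sum.elim (fun p : Fin n × Fin n => (↑g : Matrix (Fin n) (Fin n) (Localization.Away (algebraMap V C a))) p.1 p.2)
              (fun p : Fin n × Fin n => (↑g⁻¹ : Matrix (Fin n) (Fin n) (Localization.Away (algebraMap V C a))) p.1 p.2))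
  obtain ⟨N, hN⟩ := b.2
  have hN' : (algebraMap V C a) ^ N = (b : C) := hN
  have hGex : ∀ i j : Fin n, ∃ c : C,
      (algebraMap C (Localization.Away (algebraMap V C a))) c = (algebraMap C (Localization.Away (algebraMap V C a))) (algebraMap V C a) ^ N * (↑g : Matrix (Fin n) (Fin n) (Localization.Away (algebraMap V C a))) i j := by
    intro i j
    obtain ⟨c, hc⟩ := hb (Sum.inl (i, j))
    refine ⟨c, ?_⟩
    rw [hc]
    simp only [Sum.elim_inl]
    rw [Algebra.smul_def, ← hN', map_pow]
  have hG'ex : ∀ i j : Fin n, ∃ c : C,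
      (algebraMap C (Localization.Away (algebraMap V C a))) c = (algebraMap C (Localization.Away (algebraMap V C a))) (algebraMap V C a) ^ N * (↑g⁻¹ : Matrix (Fin n) (Fin n) (Localization.Away (algebraMap V C a))) i j := by
    intro i j
    obtain ⟨c, hc⟩ := hb (Sum.inr (i, j))
    refine ⟨c, ?_⟩
    rw [hc]
    simp only [Sum.elim_inr]
    rw [Algebra.smul_def, ← hN', map_pow]
  choose G hG using hGex
  choose G' hG' using hG'ex
  have hGm : (algebraMap C (Localization.Away (algebraMap V C a))).mapMatrix (Matrix.of G) = ((algebraMap C (Localization.Away (algebraMap V C a))) (algebraMap V C a) ^ N) • (↑g : Matrix (Fin n) (Fin n) (Localization.Away (algebraMap V C a))) := by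
    ext i j
    simpa [RingHom.mapMatrix_apply, Matrix.map_apply, Matrix.smul_apply, smul_eq_mul] using
      hG i j
  have hGm' : (algebraMap C (Localization.Away (algebraMap V C a))).mapMatrix (Matrix.of G') = ((algebraMap C (Localization.Away (algebraMap V C a))) (algebraMap V C a) ^ N) • (↑g⁻¹ : Matrix (Fin n) (Fin n) (Localization.Away (algebraMap V C a))) := by
    ext i j
    simpa [RingHom.mapMatrix_apply, Matrix.map_apply, Matrix.smul_apply, smul_eq_mul] using
      hG' i j
  choose vmat emat hve using fun i j => happrox (2 * N + 1) (Matrix.of G i j)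
  have hVm : (algebraMap V C).mapMatrix (Matrix.of vmat)
      = Matrix.of G - ((algebraMap V C a) ^ (2 * N + 1)) • Matrix.of emat := by
    ext i j
    have h5 := hve i j
    simp only [Matrix.of_apply] at h5
    simp only [RingHom.mapMatrix_apply, Matrix.map_apply, Matrix.of_apply, Matrix.sub_apply,
      Matrix.smul_apply, smul_eq_mul]
    rw [h5]
    ring
  have hsu2 : (algebraMap C (Localization.Away (algebraMap V C a))) (algebraMap V C a) * (Localization.awayMap (algebraMap V C) a) (IsLocalization.Away.invSelf (S := Localization.Away a) a)
      = 1 := by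
    have h1 : (Localization.awayMap (algebraMap V C) a) (algebraMap V (Localization.Away a) a
        * IsLocalization.Away.invSelf (S := Localization.Away a) a) = 1 := by
      rw [IsLocalization.Away.mul_invSelf, map_one]
    rw [map_mul, hψalg a] at h1
    exact h1
  have e1 : (Localization.awayMap (algebraMap V C) a).mapMatrix
        (((IsLocalization.Away.invSelf (S := Localization.Away a) a) ^ N) •
          (algebraMap V (Localization.Away a)).mapMatrix (Matrix.of vmat))
      = (Localization.awayMap (algebraMap V C) a) (IsLocalization.Away.invSelf (S := Localization.Away a) a) ^ N •
          (algebraMap C (Localization.Away (algebraMap V C a))).mapMatrix ((algebraMap V C).mapMatrix (Matrix.of vmat)) := by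
    rw [mapMatrix_smul, map_pow]
    congr 1
    ext i j
    simp only [RingHom.mapMatrix_apply, Matrix.map_apply]
    exact hψalg (vmat i j)
  have c1 : (Localization.awayMap (algebraMap V C) a) (IsLocalization.Away.invSelf (S := Localization.Away a) a) ^ N
      * (algebraMap C (Localization.Away (algebraMap V C a))) (algebraMap V C a) ^ N = 1 := by
    rw [← mul_pow, mul_comm, hsu2, one_pow]
  have c2 : (Localization.awayMap (algebraMap V C) a) (IsLocalization.Away.invSelf (S := Localization.Away a) a) ^ N
      * (algebraMap C (Localization.Away (algebraMap V C a))) (algebraMap V C a) ^ (2 * N + 1) = (algebraMap C (Localization.Away (algebraMap V C a))) (algebraMap V C a) ^ (N + 1) := by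
    have h2 : (2 * N + 1) = N + (N + 1) := by ring
    rw [h2, pow_add, ← mul_assoc, c1, one_mul]
  have e3 : (Localization.awayMap (algebraMap V C) a).mapMatrix
        (((IsLocalization.Away.invSelf (S := Localization.Away a) a) ^ N) •
          (algebraMap V (Localization.Away a)).mapMatrix (Matrix.of vmat))
      = (↑g : Matrix (Fin n) (Fin n) (Localization.Away (algebraMap V C a))) - ((algebraMap C (Localization.Away (algebraMap V C a))) (algebraMap V C a)) ^ (N + 1) • (algebraMap C (Localization.Away (algebraMap V C a))).mapMatrix (Matrix.of emat) := by
    rw [e1, hVm, map_sub, mapMatrix_smul, map_pow, hGm, smul_sub, smul_smul, smul_smul, c1,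
      c2, one_smul]
  have e4 : (↑g : Matrix (Fin n) (Fin n) (Localization.Away (algebraMap V C a))) *
        (algebraMap C (Localization.Away (algebraMap V C a))).mapMatrix (1 - (algebraMap V C a) • (Matrix.of G' * Matrix.of emat))
      = (↑g : Matrix (Fin n) (Fin n) (Localization.Away (algebraMap V C a))) - ((algebraMap C (Localization.Away (algebraMap V C a))) (algebraMap V C a)) ^ (N + 1) • (algebraMap C (Localization.Away (algebraMap V C a))).mapMatrix (Matrix.of emat) := by
    rw [map_sub, map_one, mapMatrix_smul, map_mul, hGm', Matrix.mul_sub, Matrix.mul_one]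
    congr 1
    rw [Matrix.mul_smul, Matrix.smul_mul, Matrix.mul_smul, ← Matrix.mul_assoc]
    rw [show ((↑g : Matrix (Fin n) (Fin n) (Localization.Away (algebraMap V C a))) * (↑g⁻¹ : Matrix (Fin n) (Fin n) (Localization.Away (algebraMap V C a)))) = 1 from g.mul_inv, Matrix.one_mul]
    rw [smul_smul, ← pow_succ']
  have hkey : (Localization.awayMap (algebraMap V C) a).mapMatrix
        (((IsLocalization.Away.invSelf (S := Localization.Away a) a) ^ N) •
          (algebraMap V (Localization.Away a)).mapMatrix (Matrix.of vmat))
      = (↑g : Matrix (Fin n) (Fin n) (Localization.Away (algebraMap V C a))) *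
          (algebraMap C (Localization.Away (algebraMap V C a))).mapMatrix (1 - (algebraMap V C a) • (Matrix.of G' * Matrix.of emat)) :=
    e3.trans e4.symm
  have hq1 : (Ideal.Quotient.mk (Ideal.span {(algebraMap V C a)})).mapMatrix
      (1 - (algebraMap V C a) • (Matrix.of G' * Matrix.of emat)) = 1 := by
    rw [map_sub, map_one, mapMatrix_smul,
      Ideal.Quotient.eq_zero_iff_mem.mpr (Ideal.mem_span_singleton_self (algebraMap V C a)), zero_smul,
      sub_zero]
  have hdK : IsUnit (1 - (algebraMap V C a) • (Matrix.of G' * Matrix.of emat)).det := by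
    have hdetq : Ideal.Quotient.mk (Ideal.span {(algebraMap V C a)})
        (1 - (algebraMap V C a) • (Matrix.of G' * Matrix.of emat)).det = 1 := by
      have h6 := congrArg Matrix.det hq1
      rw [Matrix.det_one] at h6
      calc Ideal.Quotient.mk (Ideal.span {(algebraMap V C a)})
            (1 - (algebraMap V C a) • (Matrix.of G' * Matrix.of emat)).det
          = ((Ideal.Quotient.mk (Ideal.span {(algebraMap V C a)})).mapMatrix
              (1 - (algebraMap V C a) • (Matrix.of G' * Matrix.of emat))).det :=
            RingHom.map_det _ _
        _ = 1 := h6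
    have hmem : (1 - (algebraMap V C a) • (Matrix.of G' * Matrix.of emat)).det - 1
        ∈ Ideal.span {(algebraMap V C a)} := by
      rw [← Ideal.Quotient.eq_zero_iff_mem, map_sub, map_one, hdetq, sub_self]
    have h1 := hone _ hmem
    simpa using h1
  have hK : IsUnit (1 - (algebraMap V C a) • (Matrix.of G' * Matrix.of emat)) :=
    (Matrix.isUnit_iff_isUnit_det _).mpr hdK
  have hUKL : (↑(Units.map (algebraMap C (Localization.Away (algebraMap V C a))).mapMatrix.toMonoidHom hK.unit) : Matrix (Fin n) (Fin n) (Localization.Away (algebraMap V C a)))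
      = (algebraMap C (Localization.Away (algebraMap V C a))).mapMatrix (1 - (algebraMap V C a) • (Matrix.of G' * Matrix.of emat)) :=
    congrArg (⇑((algebraMap C (Localization.Away (algebraMap V C a))).mapMatrix)) hK.unit_spec
  have hdh : IsUnit (((IsLocalization.Away.invSelf (S := Localization.Away a) a) ^ N) •
      (algebraMap V (Localization.Away a)).mapMatrix (Matrix.of vmat)).det := by
    apply hloc
    have h2 : (Localization.awayMap (algebraMap V C) a).mapMatrix
          (((IsLocalization.Away.invSelf (S := Localization.Away a) a) ^ N) •
            (algebraMap V (Localization.Away a)).mapMatrix (Matrix.of vmat))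
        = ((g * Units.map (algebraMap C (Localization.Away (algebraMap V C a))).mapMatrix.toMonoidHom hK.unit : (Matrix (Fin n) (Fin n) (Localization.Away (algebraMap V C a)))ˣ)
            : Matrix (Fin n) (Fin n) (Localization.Away (algebraMap V C a))) := by
      rw [Units.val_mul, hUKL, hkey]
    have h3 : IsUnit ((Localization.awayMap (algebraMap V C) a).mapMatrix
        (((IsLocalization.Away.invSelf (S := Localization.Away a) a) ^ N) •
          (algebraMap V (Localization.Away a)).mapMatrix (Matrix.of vmat))) :=
      h2 ▸ (g * Units.map (algebraMap C (Localization.Away (algebraMap V C a))).mapMatrix.toMonoidHom hK.unit).isUnit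
    have h4 := (Matrix.isUnit_iff_isUnit_det _).mp h3
    rwa [← RingHom.map_det] at h4
  refine ⟨((Matrix.isUnit_iff_isUnit_det _).mpr hdh).unit, hK.unit⁻¹, ?_⟩
  rw [map_inv, eq_mul_inv_iff_mul_eq]
  apply Units.ext
  rw [Units.val_mul]
  have hhval : (↑(Units.map (Localization.awayMap (algebraMap V C) a).mapMatrix.toMonoidHom
      ((Matrix.isUnit_iff_isUnit_det _).mpr hdh).unit) : Matrix (Fin n) (Fin n) (Localization.Away (algebraMap V C a)))
      = (Localization.awayMap (algebraMap V C) a).mapMatrix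
          (((IsLocalization.Away.invSelf (S := Localization.Away a) a) ^ N) •
            (algebraMap V (Localization.Away a)).mapMatrix (Matrix.of vmat)) :=
    congrArg (⇑((Localization.awayMap (algebraMap V C) a).mapMatrix)) (IsUnit.unit_spec _)
  rw [hhval, hkey, ← hUKL]

end Stmt13Aux

/-- Product formula for `GLₙ`: for a valuation ring `V`, a nonzero `a` in the maximal ideal,
the `a`-adic completion `C := AdicCompletion (Ideal.span {a}) V` with `ā` the image of `a`,
and `L := C[1/ā]` (the fraction field of `C`), every element of `GLₙ(L)` is a product of the
image of an element of `GLₙ(V[1/a])` and the image of an element of `GLₙ(C)`. -/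
theorem stmt13 (V : Type*) [CommRing V] [IsDomain V] [ValuationRing V]
    (a : V) (ha : a ≠ 0) (ham : a ∈ IsLocalRing.maximalIdeal V) (n : ℕ)
    (g : GL (Fin n) (Localization.Away
        (algebraMap V (AdicCompletion (Ideal.span {a}) V) a))) :
    ∃ (h : GL (Fin n) (Localization.Away a))
      (k : GL (Fin n) (AdicCompletion (Ideal.span {a}) V)),
      g = Units.map (RingHom.mapMatrix
            (Localization.awayMap (algebraMap V (AdicCompletion (Ideal.span {a}) V))
              a)).toMonoidHom h *
          Units.map (RingHom.mapMatrix
            (algebraMap (AdicCompletion (Ideal.span {a}) V)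
              (Localization.Away
                (algebraMap V (AdicCompletion (Ideal.span {a}) V) a)))).toMonoidHom k := by
  rcases subsingleton_or_nontrivial (Localization.Away
      (algebraMap V (AdicCompletion (Ideal.span {a}) V) a)) with hT | hT
  · exact ⟨1, 1, Units.ext (Subsingleton.elim _ _)⟩
  · exact Stmt13Aux.key V (AdicCompletion (Ideal.span {a}) V) a n
      (fun m c => Stmt13Aux.exists_approx ha m c)
      (fun x hx => Stmt13Aux.isUnit_one_add_span x hx)
      (fun x hx => Stmt13Aux.isUnit_of_map_isUnit a ha x hx) g
end
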